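/- arXiv:1506.01456 — 4 statements merged into one kernel-verified Lean document; each statement's English description precedes it below -/
import Mathlib

section
/- Let $\varphi_i = y_i^{d_i} + q_i(y_i) - y_{i+1} - \delta_i y_{i-1}$, $i \in \mathbb{Z}/n\mathbb{Z}$, with $d_i \ge 2$ and $\deg q_i \le d_i - 1$. Any polynomial $g \in \mathbb{C}[y_1,\dots,y_n]$ whose leading monomial (for graded lex order) is $y_1^{d_1-1}\cdots y_n^{d_n-1}$ does not belong to the ideal $\langle \varphi_1,\dots,\varphi_n \rangle$. -/
open MvPolynomial

/-- `y^a` is strictly smaller than `y^b` in the graded lexicographic order. -/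
def GradedLexLT {n : ℕ} (a b : Fin n →₀ ℕ) : Prop :=
  (∑ i, a i) < (∑ i, b i) ∨
    ((∑ i, a i) = (∑ i, b i) ∧ ∃ j, a j < b j ∧ ∀ i, i < j → a i = b i)

/-- `μ` is the leading monomial of `g` for the graded lexicographic order. -/
def IsLeadingMonomial {n : ℕ} (g : MvPolynomial (Fin n) ℂ) (μ : Fin n →₀ ℕ) : Prop :=
  μ ∈ g.support ∧ ∀ ν ∈ g.support, ν = μ ∨ GradedLexLT ν μ

namespace Stmt6Aux

variable {n : ℕ}

/-- The "synonym" value used to compare exponents in graded lex order. -/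
noncomputable def TT (a : Fin n →₀ ℕ) : ℕ ×ₗ Lex (Fin n →₀ ℕ) :=
  toLex (∑ i, a i, toLex a)

lemma TT_add (a b : Fin n →₀ ℕ) : TT (a + b) = TT a + TT b := by
  unfold TT
  rw [← toLex_add]
  congr 1
  rw [Prod.mk_add_mk, ← toLex_add]
  congr 1
  simp [Finset.sum_add_distrib]

lemma TT_inj : Function.Injective (TT (n := n)) := by
  intro a b h
  unfold TT at h
  have := congrArg ofLex h
  simp only [ofLex_toLex] at this
  have := congrArg Prod.snd this
  exact toLex.injective this

lemma TT_lt_iff {a b : Fin n →₀ ℕ} : TT a < TT b ↔ GradedLexLT a b := by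
  unfold TT GradedLexLT
  rw [Prod.Lex.lt_iff]
  constructor
  · rintro (h | ⟨h1, h2⟩)
    · exact Or.inl h
    · refine Or.inr ⟨h1, ?_⟩
      rw [Finsupp.Lex.lt_iff] at h2
      obtain ⟨i, h3, h4⟩ := h2
      exact ⟨i, h4, fun j hj => h3 j hj⟩
  · rintro (h | ⟨h1, i, h2, h3⟩)
    · exact Or.inl h
    · refine Or.inr ⟨h1, ?_⟩
      rw [Finsupp.Lex.lt_iff]
      exact ⟨i, fun j hj => h3 j hj, h2⟩

lemma TT_lt_of_degree_lt {a b : Fin n →₀ ℕ} (h : (∑ i, a i) < ∑ i, b i) :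
    TT a < TT b := by
  unfold TT; rw [Prod.Lex.lt_iff]; exact Or.inl h

lemma TT_deg (a : Fin n →₀ ℕ) : (ofLex (TT a)).1 = ∑ i, a i := rfl

end Stmt6Aux

namespace Stmt6Aux

variable {n : ℕ}

lemma TT_add_le_left {a b : Fin n →₀ ℕ} (c : Fin n →₀ ℕ) (h : TT a ≤ TT b) :
    TT (c + a) ≤ TT (c + b) := by
  rw [TT_add, TT_add]
  exact add_le_add_right h _

lemma TT_add_lt_left {a b : Fin n →₀ ℕ} (c : Fin n →₀ ℕ) (h : TT a < TT b) :
    TT (c + a) < TT (c + b) := by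
  rw [TT_add, TT_add]
  exact add_lt_add_right h _

lemma TT_add_le_right {a b : Fin n →₀ ℕ} (c : Fin n →₀ ℕ) (h : TT a ≤ TT b) :
    TT (a + c) ≤ TT (b + c) := by
  rw [TT_add, TT_add]
  exact add_le_add_left h _

/-- Coefficient of a product against a polynomial with a distinguished monomial. -/
lemma coeff_mul_eq (f p : MvPolynomial (Fin n) ℂ) (σ u : Fin n →₀ ℕ)
    (h : ∀ x y : Fin n →₀ ℕ, x + y = u → coeff x f ≠ 0 → coeff y p ≠ 0 → y = σ) :
    coeff u (f * p) = if σ ≤ u then coeff (u - σ) f * coeff σ p else 0 := by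
  rw [MvPolynomial.coeff_mul]
  split_ifs with hle
  · refine Finset.sum_eq_single (u - σ, σ) ?_ ?_
    · rintro ⟨x, y⟩ hxy hne
      rw [Finset.HasAntidiagonal.mem_antidiagonal] at hxy
      dsimp only at hxy ⊢
      by_contra hc
      have hx : coeff x f ≠ 0 := fun h0 => hc (by simp [h0])
      have hy : coeff y p ≠ 0 := fun h0 => hc (by simp [h0])
      have hyσ : y = σ := h x y hxy hx hy
      subst hyσ
      exact hne (Prod.ext (eq_tsub_of_add_eq hxy) rfl)
    · intro hmem
      exact absurd (Finset.HasAntidiagonal.mem_antidiagonal.mpr (tsub_add_cancel_of_le hle)) hmem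
  · refine Finset.sum_eq_zero ?_
    rintro ⟨x, y⟩ hxy
    rw [Finset.HasAntidiagonal.mem_antidiagonal] at hxy
    dsimp only at hxy ⊢
    by_contra hc
    have hx : coeff x f ≠ 0 := fun h0 => hc (by simp [h0])
    have hy : coeff y p ≠ 0 := fun h0 => hc (by simp [h0])
    have hyσ : y = σ := h x y hxy hx hy
    exact hle (hyσ ▸ hxy ▸ le_add_self)

end Stmt6Aux

namespace Stmt6Aux

variable {n : ℕ}

lemma support_monomial_mul (ν : Fin n →₀ ℕ) (c : ℂ) (p : MvPolynomial (Fin n) ℂ) :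
    (monomial ν c * p).support ⊆ p.support.image (ν + ·) := by
  intro ρ hρ
  rw [mem_support_iff, MvPolynomial.coeff_mul] at hρ
  by_contra hc
  apply hρ
  refine Finset.sum_eq_zero ?_
  rintro ⟨x, y⟩ hxy
  rw [Finset.HasAntidiagonal.mem_antidiagonal] at hxy
  dsimp only at hxy ⊢
  rcases eq_or_ne x ν with rfl | hx
  · rcases eq_or_ne (coeff y p) 0 with h0 | h0
    · rw [h0, mul_zero]
    · exact absurd (Finset.mem_image.mpr ⟨y, mem_support_iff.mpr h0, hxy⟩) hc
  · rw [coeff_monomial, if_neg (fun h => hx h.symm), zero_mul]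

end Stmt6Aux

open Stmt6Aux in
/-- Any polynomial whose leading monomial (graded lex) is `y₁^{d₁-1} ⋯ yₙ^{dₙ-1}`
does not belong to the ideal `⟨φ₁, …, φₙ⟩`. -/
theorem stmt6 (n : ℕ) [NeZero n] (d : Fin n → ℕ) (hd : ∀ i, 2 ≤ d i)
    (δ : Fin n → ℂ) (q : Fin n → Polynomial ℂ)
    (hq : ∀ i, (q i).degree ≤ (d i - 1 : ℕ))
    (φ : Fin n → MvPolynomial (Fin n) ℂ)
    (hφ : ∀ i, φ i = X i ^ d i + Polynomial.aeval (X i) (q i)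
        - X (i + 1) - C (δ i) * X (i - 1))
    (g : MvPolynomial (Fin n) ℂ)
    (hg : IsLeadingMonomial g (Finsupp.equivFunOnFinite.symm fun i => d i - 1)) :
    g ∉ Ideal.span (Set.range φ) := by
  intro hmem
  obtain ⟨a0, ha0⟩ := (Ideal.mem_span_range_iff_exists_fun).mp hmem
  set μ : Fin n →₀ ℕ := Finsupp.equivFunOnFinite.symm fun i => d i - 1 with hμdef
  obtain ⟨hμsupp, hμmax'⟩ := hg
  have hμmax : ∀ ν ∈ g.support, TT ν ≤ TT μ := by
    intro ν hν
    rcases hμmax' ν hν with rfl | h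
    · exact le_rfl
    · exact le_of_lt (TT_lt_iff.mpr h)
  set σ : Fin n → (Fin n →₀ ℕ) := fun i => Finsupp.single i (d i) with hσdef
  have hσsum : ∀ i, ∑ j, (σ i) j = d i := by
    intro i
    simp [hσdef, Finsupp.single_apply]
  -- degree bound on the "tail" of φ i
  have hr : ∀ i, (φ i - X i ^ d i).totalDegree ≤ d i - 1 := by
    intro i
    have heq : φ i - X i ^ d i
        = Polynomial.aeval (X i) (q i) + (-(X (i+1)) + -(C (δ i) * X (i-1))) := by
      rw [hφ i]; ring
    rw [heq]
    have b1 : (Polynomial.aeval (X (i : Fin n)) (q i) : MvPolynomial (Fin n) ℂ).totalDegree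
        ≤ d i - 1 := by
      rw [Polynomial.aeval_eq_sum_range]
      refine (totalDegree_finset_sum _ _).trans ?_
      refine Finset.sup_le fun k hk => ?_
      refine (totalDegree_smul_le _ _).trans ?_
      rw [totalDegree_X_pow]
      rw [Finset.mem_range] at hk
      have : (q i).natDegree ≤ d i - 1 :=
        Polynomial.natDegree_le_iff_degree_le.mpr (by exact_mod_cast hq i)
      omega
    have b2 : (-(X (i+1) : MvPolynomial (Fin n) ℂ)).totalDegree ≤ d i - 1 := by
      rw [totalDegree_neg, totalDegree_X]
      have := hd i; omega
    have b3 : (-(C (δ i) * X (i-1) : MvPolynomial (Fin n) ℂ)).totalDegree ≤ d i - 1 := by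
      rw [totalDegree_neg]
      refine (totalDegree_mul _ _).trans ?_
      rw [totalDegree_C, totalDegree_X]
      have := hd i; omega
    refine (totalDegree_add _ _).trans (max_le b1 ?_)
    exact (totalDegree_add _ _).trans (max_le b2 b3)
  have hφsupp : ∀ i, ∀ ρ ∈ (φ i).support, ρ = σ i ∨ TT ρ < TT (σ i) := by
    intro i ρ hρ
    by_cases h : ρ = σ i
    · exact Or.inl h
    · right
      rw [show φ i = X i ^ d i + (φ i - X i ^ d i) by ring] at hρ
      rcases Finset.mem_union.mp (MvPolynomial.support_add hρ) with h1 | h2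
      · rw [support_X_pow] at h1
        exact absurd (Finset.mem_singleton.mp h1) h
      · apply TT_lt_of_degree_lt
        have hle := MvPolynomial.le_totalDegree h2
        have hsum : ∑ j, ρ j = ρ.sum fun _ e => e :=
          (Finsupp.sum_fintype ρ (fun _ e => e) (fun _ => rfl)).symm
        rw [hsum, hσsum i]
        have := hr i; have := hd i
        omega
  have hφle : ∀ i, ∀ ρ ∈ (φ i).support, TT ρ ≤ TT (σ i) := by
    intro i ρ hρ
    rcases hφsupp i ρ hρ with rfl | h
    · exact le_rfl
    · exact le_of_lt h
  have hφcoeff : ∀ i, coeff (σ i) (φ i) = 1 := by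
    intro i
    have h2 : coeff (σ i) (φ i - X i ^ d i) = 0 := by
      by_contra h0
      have h3 := MvPolynomial.le_totalDegree (mem_support_iff.mpr h0)
      have h4 : (σ i).sum (fun _ e => e) = d i := by
        have h6 := hσsum i
        rw [← h6]
        exact Finsupp.sum_fintype (σ i) (fun _ e => e) (fun _ => rfl)
      have := hr i; have := hd i
      omega
    have h5 : coeff (σ i) (φ i) = coeff (σ i) (X i ^ d i) + coeff (σ i) (φ i - X i ^ d i) := by
      rw [← MvPolynomial.coeff_add]
      congr 1
      ring
    rw [h5, h2, add_zero, MvPolynomial.coeff_X_pow, if_pos rfl]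
  -- the key coefficient formula
  have hckey : ∀ (b : MvPolynomial (Fin n) ℂ) (i : Fin n) (u : Fin n →₀ ℕ),
      (∀ x ∈ b.support, TT (x + σ i) ≤ TT u) →
      coeff u (b * φ i) = if σ i ≤ u then coeff (u - σ i) b else 0 := by
    intro b i u hb
    have h := coeff_mul_eq b (φ i) (σ i) u ?_
    · rw [h, hφcoeff i]
      split_ifs <;> simp
    · intro x y hxy hx hy
      by_contra hne
      rcases hφsupp i y (mem_support_iff.mpr hy) with h1 | h1
      · exact hne h1
      · have h2 : TT (x + y) < TT (x + σ i) := TT_add_lt_left x h1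
        have h3 := hb x (mem_support_iff.mpr hx)
        rw [hxy] at h2
        exact absurd (h2.trans_le h3) (lt_irrefl _)
  have hσμ : ∀ i, ¬ σ i ≤ μ := by
    intro i hle
    have h1 : (σ i) i ≤ μ i := hle i
    have h2 : (σ i) i = d i := by simp [hσdef]
    have h3 : μ i = d i - 1 := by simp [hμdef]
    have := hd i
    omega
  have hμcoeff : coeff μ g ≠ 0 := mem_support_iff.mp hμsupp
  -- main well-founded induction
  have wfT : WellFounded (fun x y : Fin n →₀ ℕ => TT x < TT y) :=
    InvImage.wf _ (wellFounded_lt)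
  have main : ∀ MM : Fin n →₀ ℕ, ∀ N : ℕ, ∀ a : Fin n → MvPolynomial (Fin n) ℂ,
      (∀ i, ∀ ν ∈ (a i).support, TT (ν + σ i) ≤ TT MM) →
      ((Finset.univ.filter fun i => coeff MM (a i * φ i) ≠ 0).card ≤ N) →
      g ≠ ∑ i, a i * φ i := by
    intro MM
    induction MM using wfT.induction with
    | _ MM IHM =>
    intro N
    induction N using Nat.strong_induction_on with
    | _ N IHN =>
    intro a h1 h2 hrep
    have hc : ∀ i, coeff MM (a i * φ i)
        = if σ i ≤ MM then coeff (MM - σ i) (a i) else 0 := by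
      intro i
      exact hckey (a i) i MM (fun x hx => h1 i x hx)
    rcases le_or_gt (TT MM) (TT μ) with hA | hB
    · -- the top bound is at most μ : coefficient of μ in g must vanish, contradiction
      apply hμcoeff
      rw [hrep, MvPolynomial.coeff_sum]
      refine Finset.sum_eq_zero fun i _ => ?_
      rw [hckey (a i) i μ (fun x hx => (h1 i x hx).trans hA), if_neg (hσμ i)]
    · -- μ is strictly below MM
      have hMMg : coeff MM g = 0 := by
        by_contra h0
        exact absurd (hμmax MM (mem_support_iff.mpr h0)) (not_le.mpr hB)
      have hsum : ∑ i, coeff MM (a i * φ i) = 0 := by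
        rw [← MvPolynomial.coeff_sum, ← hrep]; exact hMMg
      set Tset := Finset.univ.filter fun i => coeff MM (a i * φ i) ≠ 0 with hTset
      rcases Finset.eq_empty_or_nonempty Tset with hTe | hTne
      · -- no index achieves MM : we may lower MM
        by_cases hz : ∀ i, a i = 0
        · apply hμcoeff
          rw [hrep]
          simp [hz]
        · push_neg at hz
          obtain ⟨i0, hi0⟩ := hz
          obtain ⟨ν0, hν0⟩ := MvPolynomial.ne_zero_iff.mp hi0
          set U := Finset.univ.biUnion
            (fun i => (a i).support.image (· + σ i)) with hU
          have hUne : U.Nonempty :=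
            ⟨ν0 + σ i0, Finset.mem_biUnion.mpr ⟨i0, Finset.mem_univ _,
              Finset.mem_image.mpr ⟨ν0, mem_support_iff.mpr hν0, rfl⟩⟩⟩
          obtain ⟨MM', hMM'U, hmax⟩ := U.exists_max_image TT hUne
          have hb1 : ∀ i, ∀ ν ∈ (a i).support, TT (ν + σ i) ≤ TT MM' := by
            intro i ν hν
            exact hmax _ (Finset.mem_biUnion.mpr ⟨i, Finset.mem_univ _,
              Finset.mem_image.mpr ⟨ν, hν, rfl⟩⟩)
          have hlt : TT MM' < TT MM := by
            obtain ⟨j, -, hj⟩ := Finset.mem_biUnion.mp hMM'U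
            obtain ⟨ν, hν, rfl⟩ := Finset.mem_image.mp hj
            refine lt_of_le_of_ne (h1 j ν hν) (fun he => ?_)
            have hMMeq : ν + σ j = MM := TT_inj he
            have hjmem : j ∈ Tset := by
              rw [hTset, Finset.mem_filter]
              refine ⟨Finset.mem_univ _, ?_⟩
              rw [hc j, if_pos (hMMeq ▸ le_add_self), ← hMMeq, add_tsub_cancel_right]
              exact mem_support_iff.mp hν
            rw [hTe] at hjmem
            exact absurd hjmem (Finset.notMem_empty j)
          exact IHM MM' hlt n a hb1
            ((Finset.card_filter_le _ _).trans (by simp)) hrep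
      · -- at least two indices achieve MM : rewrite using the trivial syzygy
        have hsum' : ∑ i ∈ Tset, coeff MM (a i * φ i) = 0 := by
          rw [hTset, Finset.sum_filter_ne_zero]
          exact hsum
        have hcard2 : 1 < Tset.card := by
          by_contra hle1
          push_neg at hle1
          have hge1 : 1 ≤ Tset.card := hTne.card_pos
          obtain ⟨j0, hj0⟩ := Finset.card_eq_one.mp (le_antisymm hle1 hge1)
          have hmem : j0 ∈ Tset := hj0 ▸ Finset.mem_singleton_self j0
          have hne0 := (Finset.mem_filter.mp hmem).2
          apply hne0
          rw [hj0, Finset.sum_singleton] at hsum'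
          exact hsum'
        obtain ⟨j, hj, k, hk, hjk⟩ := Finset.one_lt_card.mp hcard2
        have hjT : coeff MM (a j * φ j) ≠ 0 := (Finset.mem_filter.mp hj).2
        have hkT : coeff MM (a k * φ k) ≠ 0 := (Finset.mem_filter.mp hk).2
        have hjle : σ j ≤ MM := by
          by_contra h
          rw [hc j, if_neg h] at hjT
          exact hjT rfl
        have hkle : σ k ≤ MM := by
          by_contra h
          rw [hc k, if_neg h] at hkT
          exact hkT rfl
        set cj := coeff (MM - σ j) (a j) with hcjdef
        have hcjne : cj ≠ 0 := by
          rw [hc j, if_pos hjle] at hjT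
          exact hjT
        have hjkle : σ j + σ k ≤ MM := by
          intro l
          have h1l := hjle l
          have h2l := hkle l
          simp only [hσdef, Finsupp.add_apply, Finsupp.single_apply] at h1l h2l ⊢
          rcases eq_or_ne j l with rfl | hjl
          · rw [if_pos rfl] at h1l ⊢
            rw [if_neg (Ne.symm hjk)]
            omega
          · rw [if_neg hjl] at h1l ⊢
            rcases eq_or_ne k l with rfl | hkl
            · rw [if_pos rfl] at h2l ⊢
              omega
            · rw [if_neg hkl]
              omega
        set ν := MM - (σ j + σ k) with hνdef
        have hνMM : ν + (σ j + σ k) = MM := tsub_add_cancel_of_le hjkle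
        set ε : Fin n → MvPolynomial (Fin n) ℂ := fun i =>
          if i = j then -(monomial ν cj * φ k)
          else if i = k then monomial ν cj * φ j else 0 with hεdef
        set a' : Fin n → MvPolynomial (Fin n) ℂ := fun i => a i + ε i with ha'def
        have hεj : ε j = -(monomial ν cj * φ k) := by simp [hεdef]
        have hεk : ε k = monomial ν cj * φ j := by simp [hεdef, Ne.symm hjk]
        have hεo : ∀ i, i ≠ j → i ≠ k → ε i = 0 := by
          intro i h1i h2i; simp [hεdef, h1i, h2i]
        have hrep' : g = ∑ i, a' i * φ i := by
          have hε0 : ∑ i, ε i * φ i = 0 := by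
            have hss : ∑ i ∈ ({j, k} : Finset (Fin n)), ε i * φ i
                = ∑ i, ε i * φ i := by
              refine Finset.sum_subset (Finset.subset_univ _) ?_
              intro x _ hx
              simp only [Finset.mem_insert, Finset.mem_singleton] at hx
              push_neg at hx
              rw [hεo x hx.1 hx.2, zero_mul]
            rw [← hss, Finset.sum_pair hjk, hεj, hεk]
            ring
          simp only [ha'def, add_mul, Finset.sum_add_distrib, hε0, add_zero]
          exact hrep
        have hb1' : ∀ i, ∀ ρ ∈ (a' i).support, TT (ρ + σ i) ≤ TT MM := by
          have haux : ∀ l m : Fin n, ν + (σ l + σ m) = MM →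
              ∀ ρ ∈ (monomial ν cj * φ m).support, TT (ρ + σ l) ≤ TT MM := by
            intro l m hlm ρ hρ
            obtain ⟨y, hy, rfl⟩ := Finset.mem_image.mp (support_monomial_mul ν cj (φ m) hρ)
            have h5 : TT ((ν + σ l) + y) ≤ TT ((ν + σ l) + σ m) :=
              TT_add_le_left _ (hφle m y hy)
            have h6 : ν + y + σ l = (ν + σ l) + y := by rw [add_right_comm]
            have h7 : (ν + σ l) + σ m = MM := by rw [add_assoc]; exact hlm
            rw [h6]
            rw [h7] at h5
            exact h5
          intro i ρ hρ
          have hρ' : ρ ∈ (a i).support ∪ (ε i).support :=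
            MvPolynomial.support_add (p := a i) (q := ε i) hρ
          rcases Finset.mem_union.mp hρ' with h8 | h8
          · exact h1 i ρ h8
          · rcases eq_or_ne i j with rfl | hij
            · rw [hεj, MvPolynomial.support_neg] at h8
              exact haux i k hνMM ρ h8
            · rcases eq_or_ne i k with rfl | hik
              · rw [hεk] at h8
                refine haux i j ?_ ρ h8
                rw [add_comm (σ i) (σ j)]
                exact hνMM
              · rw [hεo i hij hik] at h8
                simp at h8
        have hj' : coeff MM (a' j * φ j) = 0 := by
          have e1 : coeff MM (ε j * φ j) = -cj := by
            rw [hεj, neg_mul, MvPolynomial.coeff_neg, mul_assoc, ← hνMM,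
              MvPolynomial.coeff_monomial_mul]
            have e2 : coeff (σ j + σ k) (φ k * φ j) = 1 := by
              have e3 := hckey (φ k) j (σ j + σ k) ?_
              · rw [e3, if_pos le_self_add, add_tsub_cancel_left, hφcoeff]
              · intro x hx
                calc TT (x + σ j) ≤ TT (σ k + σ j) := TT_add_le_right _ (hφle k x hx)
                  _ = TT (σ j + σ k) := by rw [add_comm]
            rw [e2, mul_one]
          have e4 : a' j * φ j = a j * φ j + ε j * φ j := by
            rw [ha'def]; ring
          rw [e4, MvPolynomial.coeff_add, e1, hc j, if_pos hjle, ← hcjdef]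
          ring
        have hsubset : (Finset.univ.filter fun i => coeff MM (a' i * φ i) ≠ 0)
            ⊆ Tset.erase j := by
          intro i hi
          have hi2 : coeff MM (a' i * φ i) ≠ 0 := (Finset.mem_filter.mp hi).2
          rcases eq_or_ne i j with rfl | hij
          · exact absurd hj' hi2
          · rcases eq_or_ne i k with rfl | hik
            · exact Finset.mem_erase.mpr ⟨Ne.symm hjk, hk⟩
            · refine Finset.mem_erase.mpr ⟨hij, ?_⟩
              rw [hTset, Finset.mem_filter]
              refine ⟨Finset.mem_univ _, ?_⟩
              have e5 : a' i = a i := by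
                rw [ha'def]
                simp [hεo i hij hik]
              rwa [e5] at hi2
        refine IHN (Tset.card - 1) ?_ a' hb1' ?_ hrep'
        · omega
        · calc (Finset.univ.filter fun i => coeff MM (a' i * φ i) ≠ 0).card
              ≤ (Tset.erase j).card := Finset.card_le_card hsubset
            _ = Tset.card - 1 := Finset.card_erase_of_mem hj
  -- initial call
  by_cases hz : ∀ i, a0 i = 0
  · apply hμcoeff
    rw [← ha0]
    simp [hz]
  · push_neg at hz
    obtain ⟨i0, hi0⟩ := hz
    obtain ⟨ν0, hν0⟩ := MvPolynomial.ne_zero_iff.mp hi0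
    set U := Finset.univ.biUnion (fun i => (a0 i).support.image (· + σ i)) with hU
    have hUne : U.Nonempty :=
      ⟨ν0 + σ i0, Finset.mem_biUnion.mpr ⟨i0, Finset.mem_univ _,
        Finset.mem_image.mpr ⟨ν0, mem_support_iff.mpr hν0, rfl⟩⟩⟩
    obtain ⟨MM0, -, hmax⟩ := U.exists_max_image TT hUne
    have hb1 : ∀ i, ∀ ν ∈ (a0 i).support, TT (ν + σ i) ≤ TT MM0 := by
      intro i ν hν
      exact hmax _ (Finset.mem_biUnion.mpr ⟨i, Finset.mem_univ _,
        Finset.mem_image.mpr ⟨ν, hν, rfl⟩⟩)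
    exact main MM0 n a0 hb1
      ((Finset.card_filter_le _ _).trans (by simp)) ha0.symm
end

section
/- Let $\Phi \in \mathbb{C}[y_1,\dots,y_n]$ be defined as $\Phi = \lambda^2 - \lambda\,\mathrm{Tr}(M_n) + \delta$ where $M_n = \prod_{j=n}^{1}\begin{pmatrix}0&1\\-\delta_j&p'_j(y_j)\end{pmatrix}$, $p_j(y_j) = y_j^{d_j} + q_j(y_j)$ is monic of degree $d_j \ge 2$ with $\deg q_j \le d_j - 1$, $\delta = \delta_1\cdots\delta_n \ne 0$, and $\lambda \in \mathbb{C}$. Then $\Phi \notin \langle \varphi_1, \dots, \varphi_n \rangle$, where $\varphi_i = p_i(y_i) - y_{i+1} - \delta_i y_{i-1}$ (indices mod $n$). -/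
open MvPolynomial Matrix Polynomial

namespace Stmt7Aux

noncomputable section

variable {n : ℕ}

lemma degree_sum_eq (s : Fin n →₀ ℕ) : (s.sum fun _ e => e) = s.degree := rfl

lemma fdegree_add (a b : Fin n →₀ ℕ) : (a + b).degree = a.degree + b.degree := by
  simp [Finsupp.degree_eq_weight_one, map_add]

lemma fdegree_single (i : Fin n) (k : ℕ) : (Finsupp.single i k).degree = k := by
  simp [Finsupp.degree_eq_weight_one, Finsupp.weight_apply]

/-- Degree-bound predicate: `f = 0` or `deg f + k ≤ B`. -/
def Bnd (f : MvPolynomial (Fin n) ℂ) (k B : ℕ) : Prop :=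
  f = 0 ∨ f.totalDegree + k ≤ B

lemma Bnd.zero {k B : ℕ} : Bnd (0 : MvPolynomial (Fin n) ℂ) k B := Or.inl rfl

lemma Bnd.of_le {f : MvPolynomial (Fin n) ℂ} {k B k' B' : ℕ} (h : Bnd f k B)
    (hle : ∀ x : ℕ, x + k ≤ B → x + k' ≤ B') : Bnd f k' B' :=
  h.imp id (hle _)

lemma Bnd.add {f g : MvPolynomial (Fin n) ℂ} {k B : ℕ} (hf : Bnd f k B) (hg : Bnd g k B) :
    Bnd (f + g) k B := by
  rcases hf with rfl | hf
  · simpa using hg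
  rcases hg with rfl | hg
  · rw [add_zero]; exact Or.inr hf
  refine Or.inr ?_
  have := MvPolynomial.totalDegree_add f g
  omega

lemma Bnd.neg {f : MvPolynomial (Fin n) ℂ} {k B : ℕ} (hf : Bnd f k B) : Bnd (-f) k B := by
  rcases hf with rfl | hf
  · simpa using Bnd.zero
  · exact Or.inr (by rwa [MvPolynomial.totalDegree_neg])

lemma Bnd.sub {f g : MvPolynomial (Fin n) ℂ} {k B : ℕ} (hf : Bnd f k B) (hg : Bnd g k B) :
    Bnd (f - g) k B := by
  rw [sub_eq_add_neg]; exact hf.add hg.neg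

lemma Bnd.sum {ι : Type*} {s : Finset ι} {F : ι → MvPolynomial (Fin n) ℂ} {k B : ℕ}
    (h : ∀ i ∈ s, Bnd (F i) k B) : Bnd (∑ i ∈ s, F i) k B := by
  classical
  refine Finset.sum_induction F (fun f => Bnd f k B) (fun _ _ => Bnd.add) Bnd.zero h

lemma Bnd.mul {f g : MvPolynomial (Fin n) ℂ} {k l B C : ℕ} (hf : Bnd f k B) (hg : Bnd g l C) :
    Bnd (f * g) (k + l) (B + C) := by
  rcases hf with rfl | hf
  · simpa using Bnd.zero
  rcases hg with rfl | hg
  · simpa using Bnd.zero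
  refine Or.inr ?_
  have := MvPolynomial.totalDegree_mul f g
  omega

lemma bnd_of_support {f : MvPolynomial (Fin n) ℂ} {k B : ℕ}
    (h : ∀ s ∈ f.support, s.degree + k ≤ B) : Bnd f k B := by
  by_cases hf : f = 0
  · exact Or.inl hf
  right
  obtain ⟨s, hs, hsup⟩ := Finset.exists_mem_eq_sup f.support
    (MvPolynomial.support_nonempty.2 hf) (fun s => s.sum fun _ e => e)
  rw [MvPolynomial.totalDegree, hsup, degree_sum_eq]
  exact h s hs

lemma bnd_totalDegree_le {f : MvPolynomial (Fin n) ℂ} {B : ℕ} (h : Bnd f 0 B) :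
    f.totalDegree ≤ B := by
  rcases h with rfl | h
  · simp
  · omega

/-- Top homogeneous component of a product. -/
lemma homogeneousComponent_mul_of_le (a b : MvPolynomial (Fin n) ℂ) (A B : ℕ)
    (ha : a.totalDegree ≤ A) (hb : b.totalDegree ≤ B) :
    homogeneousComponent (A + B) (a * b) =
      homogeneousComponent A a * homogeneousComponent B b := by
  classical
  ext m
  rw [coeff_homogeneousComponent]
  split_ifs with hm
  · rw [MvPolynomial.coeff_mul, MvPolynomial.coeff_mul]
    refine Finset.sum_congr rfl ?_
    rintro ⟨u, v⟩ huv
    simp only [Finset.HasAntidiagonal.mem_antidiagonal] at huv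
    rw [coeff_homogeneousComponent, coeff_homogeneousComponent]
    have hdeg : u.degree + v.degree = A + B := by
      rw [← fdegree_add, huv, hm]
    by_cases hu : u.degree = A
    · have hv : v.degree = B := by omega
      rw [if_pos hu, if_pos hv]
    · rcases lt_or_gt_of_ne hu with hlt | hgt
      · have hv : B < v.degree := by omega
        have : MvPolynomial.coeff v b = 0 :=
          coeff_eq_zero_of_totalDegree_lt (show b.totalDegree < v.degree by omega)
        simp [if_neg hu, this]
      · have : MvPolynomial.coeff u a = 0 :=
          coeff_eq_zero_of_totalDegree_lt (show a.totalDegree < u.degree by omega)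
        rw [if_neg hu, this, zero_mul, zero_mul]
  · have : (homogeneousComponent A a * homogeneousComponent B b).IsHomogeneous (A + B) :=
      (homogeneousComponent_isHomogeneous A a).mul (homogeneousComponent_isHomogeneous B b)
    exact (this.coeff_eq_zero hm).symm

lemma mem_support_sub_homogeneousComponent {f : MvPolynomial (Fin n) ℂ} {N : ℕ}
    {s : Fin n →₀ ℕ} (hs : s ∈ (f - homogeneousComponent N f).support) :
    s ∈ f.support ∧ s.degree ≠ N := by
  rw [MvPolynomial.mem_support_iff, MvPolynomial.coeff_sub, coeff_homogeneousComponent] at hs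
  split_ifs at hs with h
  · simp at hs
  · exact ⟨MvPolynomial.mem_support_iff.2 (by simpa using hs), h⟩

lemma homogeneousComponent_eq_zero_of_bnd {f : MvPolynomial (Fin n) ℂ} {B : ℕ}
    (h : Bnd f 1 B) : homogeneousComponent B f = 0 := by
  rcases h with rfl | h
  · simp
  · exact homogeneousComponent_eq_zero _ _ (Nat.lt_of_lt_of_le (Nat.lt_succ_self _) h)

/-- If `b * Xᵢ₀^{dᵢ₀}` lies in the monomial ideal generated by `{Xⱼ^{dⱼ} : j ∈ t}` with
`i₀ ∉ t`, then `b` has an explicit representation in that ideal, with degree control. -/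
lemma K_lemma (d : Fin n → ℕ) (t : Finset (Fin n)) (i₀ : Fin n) (hi₀ : i₀ ∉ t)
    (b : MvPolynomial (Fin n) ℂ)
    (hmem : b * X i₀ ^ d i₀ ∈ Ideal.span ((fun s => MvPolynomial.monomial s (1 : ℂ)) ''
      ((fun j => Finsupp.single j (d j)) '' (t : Set (Fin n))))) :
    ∃ c : Fin n → MvPolynomial (Fin n) ℂ, (∀ j, j ∉ t → c j = 0) ∧
      b = ∑ j ∈ t, c j * X j ^ d j ∧
      ∀ j, (b = 0 → c j = 0) ∧ Bnd (c j) (d j) b.totalDegree := by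
  classical
  -- every MvPolynomial.monomial of b is divisible by some Xⱼ^{dⱼ}, j ∈ t
  have hdvd : ∀ m ∈ b.support, ∃ j ∈ t, Finsupp.single j (d j) ≤ m := by
    intro m hm
    have hm' : m + Finsupp.single i₀ (d i₀) ∈ (b * X i₀ ^ d i₀).support := by
      rw [MvPolynomial.mem_support_iff, MvPolynomial.X_pow_eq_monomial, MvPolynomial.coeff_mul_monomial']
      rw [if_pos le_add_self]
      simpa using MvPolynomial.mem_support_iff.1 hm
    obtain ⟨si, hsi, hle⟩ := mem_ideal_span_monomial_image.1 hmem _ hm'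
    obtain ⟨j, hj, rfl⟩ := hsi
    refine ⟨j, hj, ?_⟩
    have hne : j ≠ i₀ := fun h => hi₀ (h ▸ hj)
    rw [Finsupp.single_le_iff] at hle ⊢
    simpa [Finsupp.single_apply, hne.symm] using hle
  -- pick, for each MvPolynomial.monomial of b, a dividing generator
  set pick : (Fin n →₀ ℕ) → Fin n := fun m =>
    if h : ∃ j, j ∈ t ∧ Finsupp.single j (d j) ≤ m then h.choose else i₀ with hpick
  have pick_spec : ∀ m ∈ b.support, pick m ∈ t ∧ Finsupp.single (pick m) (d (pick m)) ≤ m := by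
    intro m hm
    obtain ⟨j, hj, hle⟩ := hdvd m hm
    have h : ∃ j, j ∈ t ∧ Finsupp.single j (d j) ≤ m := ⟨j, hj, hle⟩
    rw [hpick]; simp only [dif_pos h]
    exact h.choose_spec
  set c : Fin n → MvPolynomial (Fin n) ℂ := fun j =>
    ∑ m ∈ b.support.filter (fun m => pick m = j),
      MvPolynomial.monomial (m - Finsupp.single j (d j)) (MvPolynomial.coeff m b) with hc
  have hmapsto : ∀ m ∈ b.support, pick m ∈ t := fun m hm => (pick_spec m hm).1
  refine ⟨c, ?_, ?_, ?_⟩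
  · intro j hj
    rw [hc]
    refine Finset.sum_eq_zero fun m hm => ?_
    rw [Finset.mem_filter] at hm
    exact absurd (hm.2 ▸ hmapsto m hm.1) hj
  · have : ∀ j ∈ t, c j * X j ^ d j =
        ∑ m ∈ b.support.filter (fun m => pick m = j),
          MvPolynomial.monomial m (MvPolynomial.coeff m b) := by
      intro j _
      rw [hc, Finset.sum_mul]
      refine Finset.sum_congr rfl fun m hm => ?_
      rw [Finset.mem_filter] at hm
      have hle : Finsupp.single j (d j) ≤ m := hm.2 ▸ (pick_spec m hm.1).2
      rw [MvPolynomial.X_pow_eq_monomial, MvPolynomial.monomial_mul, mul_one, tsub_add_cancel_of_le hle]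
    rw [Finset.sum_congr rfl this, Finset.sum_fiberwise_of_maps_to hmapsto,
      MvPolynomial.support_sum_monomial_coeff]
  · intro j
    constructor
    · intro hb
      rw [hc]
      refine Finset.sum_eq_zero fun m hm => ?_
      rw [Finset.mem_filter] at hm
      simp [hb] at hm
    · rw [hc]
      refine Bnd.sum fun m hm => ?_
      rw [Finset.mem_filter] at hm
      have hle : Finsupp.single j (d j) ≤ m := hm.2 ▸ (pick_spec m hm.1).2
      right
      have h1 : ((MvPolynomial.monomial (m - Finsupp.single j (d j)))
          (MvPolynomial.coeff m b)).totalDegree ≤ (m - Finsupp.single j (d j)).degree := by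
        exact MvPolynomial.totalDegree_monomial_le (m - Finsupp.single j (d j)) (MvPolynomial.coeff m b)
      have h2 : (m - Finsupp.single j (d j)).degree + d j = m.degree := by
        have : (m - Finsupp.single j (d j)) + Finsupp.single j (d j) = m :=
          tsub_add_cancel_of_le hle
        calc (m - Finsupp.single j (d j)).degree + d j
            = (m - Finsupp.single j (d j)).degree + (Finsupp.single j (d j)).degree := by
              rw [fdegree_single]
          _ = ((m - Finsupp.single j (d j)) + Finsupp.single j (d j)).degree := by
              rw [fdegree_add]
          _ = m.degree := by rw [this]
      have h3 : m.degree ≤ b.totalDegree := by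
        have := MvPolynomial.le_totalDegree (p := b) hm.1
        rwa [degree_sum_eq] at this
      omega

lemma bnd_X_pow (i : Fin n) (k : ℕ) : Bnd (X i ^ k : MvPolynomial (Fin n) ℂ) 0 k :=
  Or.inr (by rw [MvPolynomial.totalDegree_X_pow]; omega)

/-- Koszul-type syzygies of pairwise distinct pure powers, with degree control. -/
lemma syzygy (d : Fin n → ℕ) (M : ℕ) (s : Finset (Fin n)) :
    ∀ a : Fin n → MvPolynomial (Fin n) ℂ,
    (∀ i, i ∉ s → a i = 0) →
    (∀ i, Bnd (a i) (d i) M) →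
    (∑ i ∈ s, a i * X i ^ d i) = 0 →
    ∃ h : Fin n → Fin n → MvPolynomial (Fin n) ℂ,
      (∀ i j, h i j = - h j i) ∧
      (∀ i j, i ∉ s ∨ j ∉ s → h i j = 0) ∧
      (∀ i, a i = ∑ j ∈ s, h i j * X j ^ d j) ∧
      (∀ i j, Bnd (h i j) (d i + d j) M) := by
  classical
  induction s using Finset.induction_on with
  | empty =>
    intro a ha0 _ _
    exact ⟨fun _ _ => 0, by simp, by simp,
      fun i => by simpa using ha0 i (by simp), fun i j => Bnd.zero⟩
  | @insert i₀ t hi₀ ih =>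
    intro a ha0 hBnd hsum
    rw [Finset.sum_insert hi₀] at hsum
    have hmem : a i₀ * X i₀ ^ d i₀ ∈ Ideal.span ((fun s => MvPolynomial.monomial s (1 : ℂ)) ''
        ((fun j => Finsupp.single j (d j)) '' (t : Set (Fin n)))) := by
      have heq : a i₀ * X i₀ ^ d i₀ = ∑ j ∈ t, (-(a j)) * X j ^ d j := by
        have h2 : ∑ j ∈ t, (-(a j)) * X j ^ d j = -∑ j ∈ t, a j * X j ^ d j := by
          simp
        rw [h2]
        linear_combination hsum
      rw [heq]
      exact Submodule.sum_mem _ fun j hj => Ideal.mul_mem_left _ _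
        (Ideal.subset_span ⟨Finsupp.single j (d j), ⟨j, hj, rfl⟩,
          (MvPolynomial.X_pow_eq_monomial).symm⟩)
    obtain ⟨c, hc0, hbrep, hcb⟩ := K_lemma d t i₀ hi₀ (a i₀) hmem
    have hcM : ∀ j, Bnd (c j) (d i₀ + d j) M := by
      intro j
      rcases (hcb j).2 with h0 | hdeg
      · exact Or.inl h0
      rcases hBnd i₀ with ha0' | hM
      · exact Or.inl ((hcb j).1 ha0')
      · exact Or.inr (by omega)
    set a' : Fin n → MvPolynomial (Fin n) ℂ :=
      fun j => if j ∈ t then a j + c j * X i₀ ^ d i₀ else 0 with ha'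
    have ha'0 : ∀ i, i ∉ t → a' i = 0 := fun i hi => by simp [ha', hi]
    have hbndmul : ∀ j, Bnd (c j * X i₀ ^ d i₀) (d j) M := by
      intro j
      have := (hcM j).mul (bnd_X_pow i₀ (d i₀))
      exact this.of_le (fun x hx => by omega)
    have ha'bnd : ∀ i, Bnd (a' i) (d i) M := by
      intro i
      by_cases hi : i ∈ t
      · simp only [ha', if_pos hi]
        exact (hBnd i).add (hbndmul i)
      · simp only [ha', if_neg hi]; exact Bnd.zero
    have ha'sum : ∑ j ∈ t, a' j * X j ^ d j = 0 := by
      have : ∑ j ∈ t, a' j * X j ^ d j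
          = ∑ j ∈ t, a j * X j ^ d j + (∑ j ∈ t, c j * X j ^ d j) * X i₀ ^ d i₀ := by
        rw [Finset.sum_mul, ← Finset.sum_add_distrib]
        refine Finset.sum_congr rfl fun j hj => ?_
        simp only [ha', if_pos hj]; ring
      rw [this, ← hbrep]
      linear_combination hsum
    obtain ⟨h', h'anti, h'zero, h'rep, h'bnd⟩ := ih a' ha'0 ha'bnd ha'sum
    set h : Fin n → Fin n → MvPolynomial (Fin n) ℂ := fun i j =>
      if i = i₀ ∧ j ∈ t then c j else if j = i₀ ∧ i ∈ t then -(c i) else h' i j with hdef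
    have hval1 : ∀ j ∈ t, h i₀ j = c j := fun j hj => by simp [hdef, hj]
    have hval2 : ∀ i ∈ t, h i i₀ = -(c i) := fun i hi => by
      have : i ≠ i₀ := fun e => hi₀ (e ▸ hi)
      simp [hdef, this, hi, hi₀]
    have hval3 : ∀ i j, i ≠ i₀ → j ≠ i₀ → h i j = h' i j := by
      intro i j hi hj; simp [hdef, hi, hj]
    have hval4 : ∀ i j, i ∉ t → j ∉ t → h i j = h' i j := by
      intro i j hi hj
      by_cases h1 : i = i₀ <;> by_cases h2 : j = i₀ <;> simp [hdef, h1, h2, hi, hj, hi₀]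
    refine ⟨h, ?_, ?_, ?_, ?_⟩
    · intro i j
      by_cases h3 : i ∈ t <;> by_cases h4 : j ∈ t
      · have hi' : i ≠ i₀ := fun e => hi₀ (e ▸ h3)
        have hj' : j ≠ i₀ := fun e => hi₀ (e ▸ h4)
        rw [hval3 i j hi' hj', hval3 j i hj' hi']
        exact h'anti i j
      · by_cases h2 : j = i₀
        · subst h2; rw [hval2 i h3, hval1 i h3]
        · rw [hval3 i j (fun e => hi₀ (e ▸ h3)) h2, hval3 j i h2 (fun e => hi₀ (e ▸ h3)),
            h'zero i j (Or.inr h4), h'zero j i (Or.inl h4), neg_zero]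
      · by_cases h1 : i = i₀
        · subst h1; rw [hval1 j h4, hval2 j h4, neg_neg]
        · rw [hval3 i j h1 (fun e => hi₀ (e ▸ h4)), hval3 j i (fun e => hi₀ (e ▸ h4)) h1,
            h'zero i j (Or.inl h3), h'zero j i (Or.inr h3), neg_zero]
      · rw [hval4 i j h3 h4, hval4 j i h4 h3, h'zero i j (Or.inl h3),
          h'zero j i (Or.inl h4), neg_zero]
    · intro i j hij
      rcases hij with hi | hj
      · have hi1 : i ≠ i₀ := fun e => hi (e ▸ Finset.mem_insert_self i₀ t)
        have hi2 : i ∉ t := fun e => hi (Finset.mem_insert_of_mem e)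
        by_cases h4 : j ∈ t
        · rw [hval3 i j hi1 (fun e => hi₀ (e ▸ h4))]
          exact h'zero i j (Or.inl hi2)
        · rw [hval4 i j hi2 h4]
          exact h'zero i j (Or.inl hi2)
      · have hj1 : j ≠ i₀ := fun e => hj (e ▸ Finset.mem_insert_self i₀ t)
        have hj2 : j ∉ t := fun e => hj (Finset.mem_insert_of_mem e)
        by_cases h3 : i ∈ t
        · rw [hval3 i j (fun e => hi₀ (e ▸ h3)) hj1]
          exact h'zero i j (Or.inr hj2)
        · rw [hval4 i j h3 hj2]
          exact h'zero i j (Or.inr hj2)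
    · intro i
      rw [Finset.sum_insert hi₀]
      by_cases h1 : i = i₀
      · subst h1
        have hz : h i i = 0 := by rw [hval4 i i hi₀ hi₀]; exact h'zero i i (Or.inl hi₀)
        rw [hz, zero_mul, zero_add]
        rw [Finset.sum_congr rfl fun j hj => by rw [hval1 j hj]]
        exact hbrep
      · by_cases h3 : i ∈ t
        · have : ∑ j ∈ t, h i j * X j ^ d j = a' i := by
            rw [Finset.sum_congr rfl fun j hj =>
              by rw [hval3 i j h1 (fun e => hi₀ (e ▸ hj))]]
            exact (h'rep i).symm
          rw [this, hval2 i h3]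
          simp only [ha', if_pos h3]
          ring
        · have hnot : i ∉ insert i₀ t := by simp [h1, h3]
          rw [ha0 i hnot]
          have hz : h i i₀ = 0 := by rw [hval4 i i₀ h3 hi₀]; exact h'zero i i₀ (Or.inl h3)
          rw [hz, zero_mul, zero_add]
          rw [Finset.sum_congr rfl fun j hj =>
            by rw [hval3 i j h1 (fun e => hi₀ (e ▸ hj))]]
          rw [← h'rep i, ha'0 i h3]
    · intro i j
      by_cases h1 : i = i₀ ∧ j ∈ t
      · rw [hdef]; simp only [if_pos h1]
        exact (hcM j).of_le (fun x hx => by rw [h1.1]; omega)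
      · by_cases h2 : j = i₀ ∧ i ∈ t
        · rw [hdef]; simp only [if_neg h1, if_pos h2]
          exact ((hcM i).neg).of_le (fun x hx => by rw [h2.1]; omega)
        · rw [hdef]; simp only [if_neg h1, if_neg h2]
          exact h'bnd i j

/-- The monomial ideal generated by the `X i ^ d i`. -/
def J (d : Fin n → ℕ) : Ideal (MvPolynomial (Fin n) ℂ) :=
  Ideal.span ((fun s => MvPolynomial.monomial s (1 : ℂ)) ''
    (Set.range fun i : Fin n => Finsupp.single i (d i)))

lemma X_pow_mem_J (d : Fin n → ℕ) (i : Fin n) : (X i ^ d i : MvPolynomial (Fin n) ℂ) ∈ J d := by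
  rw [MvPolynomial.X_pow_eq_monomial]
  exact Ideal.subset_span ⟨_, ⟨i, rfl⟩, rfl⟩

/-- Main induction: the top homogeneous component of any nonzero member of the ideal
generated by the `φ i` lies in the monomial ideal `J d`. -/
lemma main_induction (d : Fin n → ℕ) (hd : ∀ i, 2 ≤ d i)
    (φ : Fin n → MvPolynomial (Fin n) ℂ)
    (hφdeg : ∀ i, (φ i).totalDegree ≤ d i)
    (hφtop : ∀ i, homogeneousComponent (d i) (φ i) = X i ^ d i) :
    ∀ m : ℕ, ∀ g : Fin n → MvPolynomial (Fin n) ℂ, ∀ h : MvPolynomial (Fin n) ℂ,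
      (∀ i, Bnd (g i) (d i) m) → h = ∑ i, g i * φ i → h ≠ 0 →
      homogeneousComponent h.totalDegree h ∈ J d := by
  intro m
  induction m using Nat.strong_induction_on with
  | _ m ih =>
  intro g h hb hrep hne
  classical
  set a : Fin n → MvPolynomial (Fin n) ℂ :=
    fun i => homogeneousComponent (m - d i) (g i) with ha
  have hcomp : homogeneousComponent m h = ∑ i, a i * X i ^ d i := by
    rw [hrep, map_sum]
    refine Finset.sum_congr rfl fun i _ => ?_
    rcases hb i with h0 | hbd
    · simp [ha, h0]
    · have hmul := homogeneousComponent_mul_of_le (g i) (φ i) (m - d i) (d i)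
        (by omega) (hφdeg i)
      rw [show m - d i + d i = m from by omega] at hmul
      rw [hmul, hφtop i]
  have hdegh : h.totalDegree ≤ m := by
    apply bnd_totalDegree_le
    rw [hrep]
    refine Bnd.sum fun i _ => ?_
    have := (hb i).mul (Or.inr (by simpa using hφdeg i) : Bnd (φ i) 0 (d i))
    exact this.of_le (fun x hx => by omega)
  by_cases hc : homogeneousComponent m h = 0
  · -- top components cancel: use syzygies to lower the degree of the representation
    have hm1 : 1 ≤ m := by
      by_contra hm
      push_neg at hm
      have hz : ∀ i, g i = 0 := fun i => (hb i).resolve_right (by have := hd i; omega)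
      exact hne (by rw [hrep]; simp [hz])
    have hsum0 : ∑ i, a i * X i ^ d i = 0 := by rw [← hcomp, hc]
    have habnd : ∀ i, Bnd (a i) (d i) m := by
      intro i
      by_cases hai : a i = 0
      · exact Or.inl hai
      right
      have hgi : g i ≠ 0 := by
        rintro hgz
        exact hai (by simp [ha, hgz])
      have hbd := (hb i).resolve_left hgi
      have hhom : (a i).IsHomogeneous (m - d i) := homogeneousComponent_isHomogeneous _ _
      rw [hhom.totalDegree hai]
      omega
    obtain ⟨hh, hanti, hzero, hrep2, hbnd2⟩ := syzygy d m Finset.univ a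
      (fun i hi => absurd (Finset.mem_univ i) hi) habnd hsum0
    set r : Fin n → MvPolynomial (Fin n) ℂ := fun j => φ j - X j ^ d j with hr
    have hrbnd : ∀ j, Bnd (r j) 1 (d j) := by
      intro j
      apply bnd_of_support
      intro s hs
      simp only [hr] at hs
      rw [← hφtop j] at hs
      obtain ⟨hs1, hs2⟩ := mem_support_sub_homogeneousComponent hs
      have h3 := MvPolynomial.le_totalDegree (p := φ j) hs1
      rw [degree_sum_eq] at h3
      have h4 := hφdeg j
      omega
    have hφr : ∀ i, φ i = X i ^ d i + r i := fun i => by rw [hr]; ring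
    set F : Fin n → Fin n → MvPolynomial (Fin n) ℂ :=
      fun i j => hh i j * (X j ^ d j * r i) + hh i j * (r j * φ i) with hF
    have hFanti : ∀ i j, F i j + F j i = 0 := by
      intro i j
      rw [hF]
      simp only
      rw [hanti i j, hφr i, hφr j]
      ring
    have hFsum : ∑ i, ∑ j, F i j = 0 := by
      have hS : (∑ i, ∑ j, F i j) + (∑ i, ∑ j, F j i) = 0 := by
        calc (∑ i, ∑ j, F i j) + (∑ i, ∑ j, F j i)
            = ∑ i, ((∑ j, F i j) + (∑ j, F j i)) := by rw [← Finset.sum_add_distrib]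
          _ = ∑ i : Fin n, ∑ j : Fin n, (F i j + F j i) := by
              refine Finset.sum_congr rfl fun i _ => ?_
              rw [← Finset.sum_add_distrib]
          _ = 0 := by
              refine Finset.sum_eq_zero fun i _ => Finset.sum_eq_zero fun j _ => hFanti i j
      have hswap : (∑ i, ∑ j, F j i) = ∑ i, ∑ j, F i j := Finset.sum_comm
      rw [hswap] at hS
      exact add_self_eq_zero.mp hS
    have hkey : ∑ i, (a i + ∑ j, hh i j * r j) * φ i = 0 := by
      have e1 : ∑ i, a i * φ i = ∑ i, ∑ j, hh i j * (X j ^ d j * r i) := by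
        calc ∑ i, a i * φ i = ∑ i, (a i * X i ^ d i + a i * r i) := by
              refine Finset.sum_congr rfl fun i _ => ?_
              rw [hφr i]; ring
          _ = ∑ i, a i * r i := by rw [Finset.sum_add_distrib, hsum0, zero_add]
          _ = ∑ i, (∑ j, hh i j * X j ^ d j) * r i := by
              refine Finset.sum_congr rfl fun i _ => ?_
              rw [← Finset.sum_congr rfl fun j (_ : j ∈ Finset.univ) => rfl, ← hrep2 i]
          _ = ∑ i, ∑ j, hh i j * (X j ^ d j * r i) := by
              refine Finset.sum_congr rfl fun i _ => ?_
              rw [Finset.sum_mul]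
              exact Finset.sum_congr rfl fun j _ => by ring
      have e2 : ∑ i, (∑ j, hh i j * r j) * φ i = ∑ i, ∑ j, hh i j * (r j * φ i) := by
        refine Finset.sum_congr rfl fun i _ => ?_
        rw [Finset.sum_mul]
        exact Finset.sum_congr rfl fun j _ => by ring
      calc ∑ i, (a i + ∑ j, hh i j * r j) * φ i
          = (∑ i, a i * φ i) + ∑ i, (∑ j, hh i j * r j) * φ i := by
            rw [← Finset.sum_add_distrib]
            exact Finset.sum_congr rfl fun i _ => by ring
        _ = ∑ i, ∑ j, F i j := by
            rw [e1, e2, ← Finset.sum_add_distrib]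
            refine Finset.sum_congr rfl fun i _ => ?_
            rw [← Finset.sum_add_distrib]
        _ = 0 := hFsum
    set g' : Fin n → MvPolynomial (Fin n) ℂ :=
      fun i => g i - a i - ∑ j, hh i j * r j with hg'
    have hrep' : h = ∑ i, g' i * φ i := by
      have hterm : ∀ i : Fin n, g' i * φ i
          = g i * φ i - (a i + ∑ j, hh i j * r j) * φ i := fun i => by
        rw [hg']; ring
      rw [Finset.sum_congr rfl fun i _ => hterm i, Finset.sum_sub_distrib, hkey, sub_zero, hrep]
    have hg'bnd : ∀ i, Bnd (g' i) (d i) (m - 1) := by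
      intro i
      have part1 : Bnd (g i - a i) (d i) (m - 1) := by
        by_cases hgi : g i = 0
        · exact Or.inl (by simp [ha, hgi])
        · have hbd := (hb i).resolve_left hgi
          apply bnd_of_support
          intro s hs
          rw [ha] at hs
          obtain ⟨hs1, hs2⟩ := mem_support_sub_homogeneousComponent hs
          have h3 := MvPolynomial.le_totalDegree (p := g i) hs1
          rw [degree_sum_eq] at h3
          have h4 := hd i
          omega
      have part2 : Bnd (∑ j, hh i j * r j) (d i) (m - 1) := by
        refine Bnd.sum fun j _ => ?_
        rcases hbnd2 i j with h0 | hbd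
        · exact Or.inl (by rw [h0, zero_mul])
        · have := Bnd.mul (Or.inr hbd : Bnd (hh i j) (d i + d j) m) (hrbnd j)
          exact this.of_le (fun x hx => by have := hd j; omega)
      exact part1.sub part2
    exact ih (m - 1) (by omega) g' h hg'bnd hrep' hne
  · -- the top component survives and lies in the monomial ideal
    have hup : m ≤ h.totalDegree := by
      by_contra hlt
      push_neg at hlt
      exact hc (homogeneousComponent_eq_zero _ _ hlt)
    have hdeq : h.totalDegree = m := le_antisymm hdegh hup
    rw [hdeq, hcomp]
    exact Submodule.sum_mem _ fun i _ => Ideal.mul_mem_left _ _ (X_pow_mem_J d i)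

lemma aeval_X_totalDegree_le (q : Polynomial ℂ) (k : ℕ) (hq : q.natDegree ≤ k) (i : Fin n) :
    (Polynomial.aeval (X i : MvPolynomial (Fin n) ℂ) q).totalDegree ≤ k := by
  rw [Polynomial.aeval_eq_sum_range' (Nat.lt_succ_of_le hq)]
  apply bnd_totalDegree_le
  refine Bnd.sum fun j hj => ?_
  right
  have h1 : (q.coeff j • (X i : MvPolynomial (Fin n) ℂ) ^ j).totalDegree ≤ j := by
    rw [MvPolynomial.smul_eq_C_mul]
    refine le_trans (MvPolynomial.totalDegree_mul _ _) ?_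
    simp [MvPolynomial.totalDegree_C, MvPolynomial.totalDegree_X_pow]
  have h2 : j ≤ k := Nat.lt_succ_iff.mp (Finset.mem_range.mp hj)
  omega

lemma aeval_X_homogeneousComponent (q : Polynomial ℂ) (k : ℕ) (hq : q.natDegree ≤ k)
    (i : Fin n) :
    homogeneousComponent k (Polynomial.aeval (X i : MvPolynomial (Fin n) ℂ) q)
      = MvPolynomial.C (q.coeff k) * X i ^ k := by
  rw [Polynomial.aeval_eq_sum_range' (Nat.lt_succ_of_le hq), map_sum]
  have hX : ∀ j : ℕ, ((X i : MvPolynomial (Fin n) ℂ) ^ j) ∈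
      homogeneousSubmodule (Fin n) ℂ j := by
    intro j
    rw [MvPolynomial.mem_homogeneousSubmodule, MvPolynomial.X_pow_eq_monomial]
    exact isHomogeneous_monomial _ (fdegree_single i j)
  have hterm : ∀ j ∈ Finset.range (k + 1),
      homogeneousComponent k (q.coeff j • (X i : MvPolynomial (Fin n) ℂ) ^ j)
        = if j = k then MvPolynomial.C (q.coeff k) * X i ^ k else 0 := by
    intro j _
    rw [MvPolynomial.smul_eq_C_mul, homogeneousComponent_C_mul,
      homogeneousComponent_of_mem (hX j)]
    by_cases hjk : j = k
    · subst hjk; simp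
    · rw [if_neg (fun e => hjk e.symm), if_neg hjk, mul_zero]
  rw [Finset.sum_congr rfl hterm, Finset.sum_ite_eq' (Finset.range (k + 1)) k]
  rw [if_pos (Finset.self_mem_range_succ k)]

lemma matrix_entries (d : Fin n → ℕ) (hd : ∀ i, 2 ≤ d i) (p : Fin n → Polynomial ℂ)
    (hmonic : ∀ i, (p i).Monic) (hdeg : ∀ i, (p i).natDegree = d i) (δ : Fin n → ℂ) :
    ∀ l : List (Fin n), l ≠ [] →
      ∀ W : Matrix (Fin 2) (Fin 2) (MvPolynomial (Fin n) ℂ),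
      W = (l.map (fun j => (!![0, 1; -MvPolynomial.C (δ j),
            Polynomial.aeval (X j) (derivative (p j))] :
            Matrix (Fin 2) (Fin 2) (MvPolynomial (Fin n) ℂ)))).prod →
      ∀ S : ℕ, S = (l.map (fun j => d j - 1)).sum →
      Bnd (W 0 0) 1 S ∧ Bnd (W 0 1) 1 S ∧ Bnd (W 1 0) 1 S ∧ Bnd (W 1 1) 0 S ∧
        homogeneousComponent S (W 1 1)
          = (l.map (fun j => MvPolynomial.C ((d j : ℂ)) * X j ^ (d j - 1))).prod := by
  intro l
  induction l with
  | nil => intro hne; exact absurd rfl hne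
  | cons a t iht =>
    intro _ W hW S hS
    have hda := hd a
    -- facts about the derivative entry
    have hderiv_deg : (derivative (p a)).natDegree ≤ d a - 1 := by
      have := Polynomial.natDegree_derivative_le (p a)
      rw [hdeg a] at this
      exact this
    have hP'deg : (Polynomial.aeval (X a : MvPolynomial (Fin n) ℂ)
        (derivative (p a))).totalDegree ≤ d a - 1 :=
      aeval_X_totalDegree_le _ _ hderiv_deg a
    have hcoeff : (derivative (p a)).coeff (d a - 1) = (d a : ℂ) := by
      rw [Polynomial.coeff_derivative]
      have h1 : d a - 1 + 1 = d a := by omega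
      rw [h1]
      have h2 : (p a).coeff (d a) = 1 := by
        rw [← hdeg a]
        exact (hmonic a).coeff_natDegree
      rw [h2, one_mul]
      exact_mod_cast congrArg (Nat.cast (R := ℂ)) h1
    have hP'top : homogeneousComponent (d a - 1)
        (Polynomial.aeval (X a : MvPolynomial (Fin n) ℂ) (derivative (p a)))
          = MvPolynomial.C ((d a : ℂ)) * X a ^ (d a - 1) := by
      rw [aeval_X_homogeneousComponent _ _ hderiv_deg a, hcoeff]
    by_cases ht : t = []
    · subst ht
      simp only [List.map_cons, List.map_nil, List.prod_cons, List.prod_nil, mul_one,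
        List.sum_cons, List.sum_nil, add_zero] at hW hS
      subst hW hS
      refine ⟨?_, ?_, ?_, ?_, ?_⟩
      · exact Or.inl (by simp)
      · refine Or.inr ?_
        have h01 : (!![0, 1; -MvPolynomial.C (δ a), Polynomial.aeval (X a) (derivative (p a))] :
            Matrix (Fin 2) (Fin 2) (MvPolynomial (Fin n) ℂ)) 0 1 = 1 := by simp
        rw [h01, MvPolynomial.totalDegree_one]
        omega
      · refine Or.inr ?_
        have : (!![0, 1; -MvPolynomial.C (δ a), Polynomial.aeval (X a) (derivative (p a))] :
            Matrix (Fin 2) (Fin 2) (MvPolynomial (Fin n) ℂ)) 1 0 = -MvPolynomial.C (δ a) := by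
          simp
        rw [this, MvPolynomial.totalDegree_neg, MvPolynomial.totalDegree_C]
        omega
      · refine Or.inr ?_
        have : (!![0, 1; -MvPolynomial.C (δ a), Polynomial.aeval (X a) (derivative (p a))] :
            Matrix (Fin 2) (Fin 2) (MvPolynomial (Fin n) ℂ)) 1 1
              = Polynomial.aeval (X a) (derivative (p a)) := by simp
        rw [this]
        omega
      · have : (!![0, 1; -MvPolynomial.C (δ a), Polynomial.aeval (X a) (derivative (p a))] :
            Matrix (Fin 2) (Fin 2) (MvPolynomial (Fin n) ℂ)) 1 1
              = Polynomial.aeval (X a) (derivative (p a)) := by simp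
        rw [this, hP'top]
        simp
    · -- inductive step
      set Wt := (t.map (fun j => (!![0, 1; -MvPolynomial.C (δ j),
          Polynomial.aeval (X j) (derivative (p j))] :
          Matrix (Fin 2) (Fin 2) (MvPolynomial (Fin n) ℂ)))).prod with hWt
      set St := (t.map (fun j => d j - 1)).sum with hSt
      obtain ⟨ib00, ib01, ib10, ib11, ibtop⟩ := iht ht Wt rfl St rfl
      have hWprod : W = !![0, 1; -MvPolynomial.C (δ a),
          Polynomial.aeval (X a) (derivative (p a))] * Wt := by
        rw [hW, List.map_cons, List.prod_cons]
      have hSsum : S = (d a - 1) + St := by rw [hS, List.map_cons, List.sum_cons]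
      have hSt_le : St + 1 ≤ S := by omega
      set P' := (Polynomial.aeval (X a : MvPolynomial (Fin n) ℂ) (derivative (p a))) with hP'
      have e00 : W 0 0 = Wt 1 0 := by
        rw [hWprod, Matrix.mul_apply, Fin.sum_univ_two]; simp
      have e01 : W 0 1 = Wt 1 1 := by
        rw [hWprod, Matrix.mul_apply, Fin.sum_univ_two]; simp
      have e10 : W 1 0 = -MvPolynomial.C (δ a) * Wt 0 0 + P' * Wt 1 0 := by
        rw [hWprod, Matrix.mul_apply, Fin.sum_univ_two]; simp
      have e11 : W 1 1 = -MvPolynomial.C (δ a) * Wt 0 1 + P' * Wt 1 1 := by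
        rw [hWprod, Matrix.mul_apply, Fin.sum_univ_two]; simp
      have bC : Bnd (-MvPolynomial.C (δ a) : MvPolynomial (Fin n) ℂ) 0 0 :=
        Or.inr (by rw [MvPolynomial.totalDegree_neg, MvPolynomial.totalDegree_C])
      have bP' : Bnd P' 0 (d a - 1) := Or.inr (by simpa using hP'deg)
      refine ⟨?_, ?_, ?_, ?_, ?_⟩
      · rw [e00]; exact ib10.of_le (fun x hx => by omega)
      · rw [e01]; exact ib11.of_le (fun x hx => by omega)
      · rw [e10]
        refine Bnd.add ?_ ?_
        · exact (bC.mul ib00).of_le (fun x hx => by omega)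
        · exact (bP'.mul ib10).of_le (fun x hx => by omega)
      · rw [e11]
        refine Bnd.add ?_ ?_
        · exact (bC.mul ib01).of_le (fun x hx => by omega)
        · exact (bP'.mul ib11).of_le (fun x hx => by omega)
      · rw [e11, map_add]
        have hz : homogeneousComponent S (-MvPolynomial.C (δ a) * Wt 0 1) = 0 :=
          homogeneousComponent_eq_zero_of_bnd
            ((bC.mul ib01).of_le (fun x hx => by omega))
        have hmul := homogeneousComponent_mul_of_le P' (Wt 1 1) (d a - 1) St
          hP'deg (bnd_totalDegree_le ib11)
        rw [hz, zero_add, hSsum, hmul, hP'top, ibtop, List.map_cons, List.prod_cons]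

end
end Stmt7Aux

open Stmt7Aux

/-- Corollary 4.4: `Φ ∉ ⟨φ₁, …, φₙ⟩`, where `Φ = λ² - λ Tr(Mₙ) + δ` is the multiplier
polynomial and `φᵢ = pᵢ(yᵢ) - y_{i+1} - δᵢ y_{i-1}` are the fixed-point equations. -/
theorem stmt7 (n : ℕ) [NeZero n] (d : Fin n → ℕ) (hd : ∀ i, 2 ≤ d i)
    (p : Fin n → Polynomial ℂ) (hmonic : ∀ i, (p i).Monic)
    (hdeg : ∀ i, (p i).natDegree = d i)
    (δ : Fin n → ℂ) (hδ : (∏ i, δ i) ≠ 0)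
    (lam : ℂ) (hlam : lam ≠ 0)
    (M : Matrix (Fin 2) (Fin 2) (MvPolynomial (Fin n) ℂ))
    (hM : M = ((List.ofFn fun j : Fin n =>
        (!![0, 1; -MvPolynomial.C (δ j), Polynomial.aeval (X j) (derivative (p j))] :
          Matrix (Fin 2) (Fin 2) (MvPolynomial (Fin n) ℂ))).reverse).prod)
    (Φ : MvPolynomial (Fin n) ℂ)
    (hΦ : Φ = MvPolynomial.C (lam ^ 2) - MvPolynomial.C lam * Matrix.trace M
        + MvPolynomial.C (∏ i, δ i))
    (φ : Fin n → MvPolynomial (Fin n) ℂ)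
    (hφ : ∀ i, φ i = Polynomial.aeval (X i) (p i)
        - X (i + 1) - MvPolynomial.C (δ i) * X (i - 1)) :
    Φ ∉ Ideal.span (Set.range φ) := by
  intro hmem
  classical
  have hφdeg : ∀ i, (φ i).totalDegree ≤ d i := by
    intro i
    apply bnd_totalDegree_le
    rw [hφ i]
    have b1 : Bnd (Polynomial.aeval (X i : MvPolynomial (Fin n) ℂ) (p i)) 0 (d i) :=
      Or.inr (by simpa using aeval_X_totalDegree_le (p i) (d i) (le_of_eq (hdeg i)) i)
    have b2 : Bnd (X (i + 1) : MvPolynomial (Fin n) ℂ) 0 (d i) :=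
      Or.inr (by rw [MvPolynomial.totalDegree_X]; have := hd i; omega)
    have b3 : Bnd (MvPolynomial.C (δ i) * X (i - 1) : MvPolynomial (Fin n) ℂ) 0 (d i) := by
      refine Or.inr ?_
      have h1 := MvPolynomial.totalDegree_mul (MvPolynomial.C (δ i))
        (X (i - 1) : MvPolynomial (Fin n) ℂ)
      rw [MvPolynomial.totalDegree_C, MvPolynomial.totalDegree_X] at h1
      have h2 := hd i
      omega
    exact (b1.sub b2).sub b3
  have hφtop : ∀ i, homogeneousComponent (d i) (φ i) = X i ^ d i := by
    intro i
    rw [hφ i, map_sub, map_sub]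
    have t1 : homogeneousComponent (d i)
        (Polynomial.aeval (X i : MvPolynomial (Fin n) ℂ) (p i)) = X i ^ d i := by
      rw [aeval_X_homogeneousComponent (p i) (d i) (le_of_eq (hdeg i)) i]
      have hc1 : (p i).coeff (d i) = 1 := by rw [← hdeg i]; exact (hmonic i).coeff_natDegree
      rw [hc1, MvPolynomial.C_1, one_mul]
    have t2 : homogeneousComponent (d i) (X (i + 1) : MvPolynomial (Fin n) ℂ) = 0 :=
      homogeneousComponent_eq_zero_of_bnd
        (Or.inr (by rw [MvPolynomial.totalDegree_X]; have := hd i; omega))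
    have t3 : homogeneousComponent (d i)
        (MvPolynomial.C (δ i) * X (i - 1) : MvPolynomial (Fin n) ℂ) = 0 := by
      apply homogeneousComponent_eq_zero_of_bnd
      refine Or.inr ?_
      have h1 := MvPolynomial.totalDegree_mul (MvPolynomial.C (δ i))
        (X (i - 1) : MvPolynomial (Fin n) ℂ)
      rw [MvPolynomial.totalDegree_C, MvPolynomial.totalDegree_X] at h1
      have h2 := hd i
      omega
    rw [t1, t2, t3, sub_zero, sub_zero]
  set l₀ : List (Fin n) := (List.finRange n).reverse with hl₀
  have hl₀ne : l₀ ≠ [] := by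
    rw [hl₀, ne_eq, List.reverse_eq_nil_iff, List.finRange_eq_nil_iff]
    exact NeZero.ne n
  have hMl : M = (l₀.map (fun j => (!![0, 1; -MvPolynomial.C (δ j),
      Polynomial.aeval (X j) (derivative (p j))] :
      Matrix (Fin 2) (Fin 2) (MvPolynomial (Fin n) ℂ)))).prod := by
    rw [hM, List.ofFn_eq_map, hl₀, List.map_reverse]
  set D : ℕ := ∑ i : Fin n, (d i - 1) with hD
  have hSl : D = (l₀.map (fun j => d j - 1)).sum := by
    rw [hl₀, List.map_reverse, List.sum_reverse, ← List.ofFn_eq_map, List.sum_ofFn]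
  obtain ⟨b00, b01, b10, b11, btop⟩ :=
    matrix_entries d hd p hmonic hdeg δ l₀ hl₀ne M hMl D hSl
  have hPi : (l₀.map (fun j => MvPolynomial.C ((d j : ℂ)) * X j ^ (d j - 1))).prod
      = ∏ i : Fin n, (MvPolynomial.C ((d i : ℂ)) * X i ^ (d i - 1)) := by
    rw [hl₀, List.map_reverse, List.prod_reverse, ← List.ofFn_eq_map, List.prod_ofFn]
  set v : Fin n →₀ ℕ := Finsupp.equivFunOnFinite.symm (fun i => d i - 1) with hv
  have hprodX : ∏ i : Fin n, (X i : MvPolynomial (Fin n) ℂ) ^ v i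
      = MvPolynomial.monomial v 1 := by
    rw [← MvPolynomial.prod_X_pow_eq_monomial]
    exact (Finset.prod_subset (Finset.subset_univ _) (fun x _ hx => by
      rw [Finsupp.notMem_support_iff.mp hx, pow_zero])).symm
  have hPi2 : ∏ i : Fin n, (MvPolynomial.C ((d i : ℂ)) * X i ^ (d i - 1))
      = MvPolynomial.monomial v (∏ i : Fin n, (d i : ℂ)) := by
    rw [Finset.prod_mul_distrib, ← map_prod]
    have hexp : ∏ i : Fin n, (X i : MvPolynomial (Fin n) ℂ) ^ (d i - 1)
        = ∏ i : Fin n, (X i : MvPolynomial (Fin n) ℂ) ^ v i := rfl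
    rw [hexp, hprodX, MvPolynomial.C_mul_monomial, mul_one]
  have hDpos : 1 ≤ D := by
    have hn : 0 < n := Nat.pos_of_ne_zero (NeZero.ne n)
    have h1 : d ⟨0, hn⟩ - 1 ≤ D :=
      Finset.single_le_sum (f := fun i => d i - 1) (fun _ _ => Nat.zero_le _)
        (Finset.mem_univ (⟨0, hn⟩ : Fin n))
    have := hd ⟨0, hn⟩
    omega
  have htr : Matrix.trace M = M 0 0 + M 1 1 := Matrix.trace_fin_two M
  have hcompM : homogeneousComponent D (Matrix.trace M)
      = MvPolynomial.monomial v (∏ i : Fin n, (d i : ℂ)) := by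
    rw [htr, map_add, homogeneousComponent_eq_zero_of_bnd b00, zero_add, btop, hPi, hPi2]
  set cΦ : ℂ := -(lam * ∏ i : Fin n, (d i : ℂ)) with hcΦ
  have hcΦne : cΦ ≠ 0 := by
    rw [hcΦ, neg_ne_zero]
    refine mul_ne_zero hlam (Finset.prod_ne_zero_iff.2 fun i _ => ?_)
    have := hd i
    exact Nat.cast_ne_zero.2 (by omega)
  have hcompΦ : homogeneousComponent D Φ = MvPolynomial.monomial v cΦ := by
    rw [hΦ, map_add, map_sub]
    have c1 : homogeneousComponent D (MvPolynomial.C (lam ^ 2) : MvPolynomial (Fin n) ℂ) = 0 :=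
      homogeneousComponent_eq_zero _ _ (by rw [MvPolynomial.totalDegree_C]; omega)
    have c2 : homogeneousComponent D
        (MvPolynomial.C (∏ i, δ i) : MvPolynomial (Fin n) ℂ) = 0 :=
      homogeneousComponent_eq_zero _ _ (by rw [MvPolynomial.totalDegree_C]; omega)
    rw [c1, c2, homogeneousComponent_C_mul, hcompM, add_zero, zero_sub,
      MvPolynomial.C_mul_monomial, hcΦ, ← map_neg]
  have hΦdeg_le : Φ.totalDegree ≤ D := by
    apply bnd_totalDegree_le
    rw [hΦ]
    have btr : Bnd (Matrix.trace M) 0 D := by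
      rw [htr]
      exact Bnd.add (b00.of_le fun x hx => by omega) b11
    have bC : Bnd (MvPolynomial.C lam : MvPolynomial (Fin n) ℂ) 0 0 :=
      Or.inr (by simp)
    have b4 : Bnd (MvPolynomial.C lam * Matrix.trace M) 0 D :=
      (bC.mul btr).of_le (fun x hx => by omega)
    have b5 : Bnd (MvPolynomial.C (lam ^ 2) : MvPolynomial (Fin n) ℂ) 0 D :=
      Or.inr (by rw [MvPolynomial.totalDegree_C]; omega)
    have b6 : Bnd (MvPolynomial.C (∏ i, δ i) : MvPolynomial (Fin n) ℂ) 0 D :=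
      Or.inr (by rw [MvPolynomial.totalDegree_C]; omega)
    exact (b5.sub b4).add b6
  have hΦne : Φ ≠ 0 := by
    intro h0
    rw [h0, map_zero] at hcompΦ
    have : cΦ = 0 := by
      have := congrArg (MvPolynomial.coeff v) hcompΦ
      simpa using this.symm
    exact hcΦne this
  have hΦdeg : Φ.totalDegree = D := by
    refine le_antisymm hΦdeg_le ?_
    by_contra hlt
    push_neg at hlt
    have h0 := homogeneousComponent_eq_zero _ Φ hlt
    rw [hcompΦ] at h0
    have : cΦ = 0 := by
      have := congrArg (MvPolynomial.coeff v) h0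
      simpa using this
    exact hcΦne this
  obtain ⟨g, hg⟩ := Ideal.mem_span_range_iff_exists_fun.1 hmem
  set m := Finset.univ.sup (fun i => (g i).totalDegree + d i) with hm
  have hb : ∀ i, Bnd (g i) (d i) m :=
    fun i => Or.inr (Finset.le_sup (f := fun i => (g i).totalDegree + d i) (Finset.mem_univ i))
  have hmemJ := main_induction d hd φ hφdeg hφtop m g Φ hb hg.symm hΦne
  rw [hΦdeg, hcompΦ] at hmemJ
  have hmemJ' : (MvPolynomial.monomial v cΦ : MvPolynomial (Fin n) ℂ) ∈
      Ideal.span ((fun s => MvPolynomial.monomial s (1 : ℂ)) ''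
        (Set.range fun i : Fin n => Finsupp.single i (d i))) := hmemJ
  obtain ⟨si, hsi, hle⟩ := MvPolynomial.mem_ideal_span_monomial_image.1 hmemJ' v (by
    rw [MvPolynomial.support_monomial, if_neg hcΦne]
    exact Finset.mem_singleton_self v)
  obtain ⟨i, rfl⟩ := hsi
  rw [Finsupp.single_le_iff] at hle
  have h1 := hd i
  have h2 : v i = d i - 1 := rfl
  omega
end

section
/- Let $n \ge 3$, integers $d_i \ge 2$, nonzero $\delta_i \in \mathbb{C}$, and set $\varphi_i = y_i^{d_i} - y_{i+1} - \delta_i y_{i-1}$ (indices mod $n$) in $\mathbb{C}[y_1,\dots,y_n]$. Let $\Phi = \lambda^2 - \lambda\,\mathrm{Tr}(M_n) + \delta$ with $M_n = \prod_{j=n}^{1}\begin{pmatrix}0&1\\-\delta_j& d_j y_j^{d_j-1}\end{pmatrix}$, $\delta = \delta_1\cdots\delta_n$, and $\lambda \ne 0$. Then $y_1 \Phi \notin \langle \varphi_1,\dots,\varphi_n\rangle$. -/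
open MvPolynomial Matrix
open Fin.NatCast

set_option linter.unusedSectionVars false
set_option maxHeartbeats 1000000
section ALL

namespace Stmt9Aux

section Gen


open Finsupp in
lemma degree_add' {σ : Type*} (a b : σ →₀ ℕ) : (a + b).degree = a.degree + b.degree := by
  simp only [Finsupp.degree_eq_weight_one, map_add]

lemma degree_single' {σ : Type*} (i : σ) (k : ℕ) : (Finsupp.single i k).degree = k := by
  classical
  rcases eq_or_ne k 0 with h | h
  · simp [h, Finsupp.degree]
  · exact Finsupp.degree_single i k

lemma degree_sum_eq {σ : Type*} (s : σ →₀ ℕ) : (s.sum fun _ e => e) = s.degree := rfl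

variable {σ : Type*} {K : Type*} [CommRing K]

lemma hc_mul_monomial (N : ℕ) (p : MvPolynomial σ K) (μ : σ →₀ ℕ) :
    homogeneousComponent N (p * monomial μ 1) =
      if μ.degree ≤ N then homogeneousComponent (N - μ.degree) p * monomial μ 1 else 0 := by
  ext γ
  by_cases hμN : μ.degree ≤ N
  · rw [if_pos hμN]
    rw [coeff_homogeneousComponent, coeff_mul_monomial', coeff_mul_monomial']
    by_cases hle : μ ≤ γ
    · rw [if_pos hle, if_pos hle, coeff_homogeneousComponent]
      have hdeg : (γ - μ).degree + μ.degree = γ.degree := by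
        rw [← degree_add', tsub_add_cancel_of_le hle]
      by_cases h1 : γ.degree = N
      · rw [if_pos h1, if_pos (by omega)]
      · rw [if_neg h1, if_neg (by omega), zero_mul]
    · rw [if_neg hle, if_neg hle, ite_self]
  · rw [if_neg hμN, coeff_homogeneousComponent, coeff_zero]
    by_cases h1 : γ.degree = N
    · rw [if_pos h1, coeff_mul_monomial']
      by_cases hle : μ ≤ γ
      · exfalso
        have hdeg : (γ - μ).degree + μ.degree = γ.degree := by
          rw [← degree_add', tsub_add_cancel_of_le hle]
        omega
      · rw [if_neg hle]
    · rw [if_neg h1]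

lemma hc_hc (N : ℕ) (p : MvPolynomial σ K) :
    homogeneousComponent N (homogeneousComponent N p) = homogeneousComponent N p := by
  ext γ
  rw [coeff_homogeneousComponent, coeff_homogeneousComponent]
  split_ifs with h <;> rfl

lemma totalDegree_hc_le (N : ℕ) (p : MvPolynomial σ K) :
    (homogeneousComponent N p).totalDegree ≤ N := by
  apply Finset.sup_le
  intro s hs
  rw [mem_support_iff, coeff_homogeneousComponent] at hs
  rw [degree_sum_eq]
  by_cases h : s.degree = N
  · omega
  · rw [if_neg h] at hs; exact absurd rfl hs

lemma totalDegree_lt_of_hc_zero {p : MvPolynomial σ K} {N : ℕ} (hp : p ≠ 0)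
    (hdeg : p.totalDegree ≤ N) (h0 : homogeneousComponent N p = 0) :
    p.totalDegree < N := by
  rcases lt_or_eq_of_le hdeg with h | h
  · exact h
  · exfalso
    have hne : p.support.Nonempty := by
      rw [Finset.nonempty_iff_ne_empty]
      intro hh
      exact hp (support_eq_empty.mp hh)
    obtain ⟨s, hs, hmax⟩ := Finset.exists_mem_eq_sup _ hne (fun s : σ →₀ ℕ => s.sum fun _ e => e)
    have hsd : s.degree = N := by
      rw [← degree_sum_eq, ← hmax, ← MvPolynomial.totalDegree, h]
    have : coeff s (homogeneousComponent N p) = coeff s p := by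
      rw [coeff_homogeneousComponent, if_pos hsd]
    rw [h0, coeff_zero] at this
    exact (mem_support_iff.mp hs) this.symm


end Gen

section Syz


variable {σ : Type*} [Fintype σ] [DecidableEq σ] {K : Type*} [Field K]

lemma syzygy (c : σ → ℕ) (s : Finset σ) :
    ∀ f : σ → MvPolynomial σ K,
      (∑ i ∈ s, f i * monomial (Finsupp.single i (c i)) 1) = 0 →
      ∃ h : σ → σ → MvPolynomial σ K, (∀ i j, h i j = - h j i) ∧
        ∀ i ∈ s, f i = ∑ j ∈ s, h i j * monomial (Finsupp.single j (c j)) 1 := by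
  classical
  induction s using Finset.induction_on with
  | empty => exact fun f _ => ⟨0, by simp, by simp⟩
  | @insert a s ha IH =>
    intro f hsum
    rw [Finset.sum_insert ha] at hsum
    -- every monomial of f a is divisible by some x_i^{c i}, i ∈ s
    have hdiv : ∀ β ∈ (f a).support, ∃ i ∈ s, c i ≤ β i := by
      intro β hβ
      set γ : σ →₀ ℕ := β + Finsupp.single a (c a) with hγ
      have h1 : coeff γ (f a * monomial (Finsupp.single a (c a)) 1) = coeff β (f a) := by
        rw [coeff_mul_monomial', if_pos (le_add_self), add_tsub_cancel_right, mul_one]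
      have h2 : coeff γ (f a * monomial (Finsupp.single a (c a)) 1)
          = - ∑ i ∈ s, coeff γ (f i * monomial (Finsupp.single i (c i)) 1) := by
        have := congrArg (coeff γ) hsum
        rw [coeff_add, coeff_zero, coeff_sum] at this
        exact eq_neg_of_add_eq_zero_left this
      by_contra hcon
      push_neg at hcon
      have h3 : ∀ i ∈ s, coeff γ (f i * monomial (Finsupp.single i (c i)) 1) = 0 := by
        intro i hi
        rw [coeff_mul_monomial']
        rw [if_neg]
        intro hle
        have : c i ≤ γ i := by
          simpa using (Finsupp.single_le_iff).mp hle
        have hia : i ≠ a := fun h => ha (h ▸ hi)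
        rw [hγ] at this
        simp only [Finsupp.add_apply, Finsupp.single_apply, if_neg (Ne.symm hia), add_zero] at this
        exact absurd this (not_le.mpr (hcon i hi))
      rw [h2, Finset.sum_eq_zero h3, neg_zero] at h1
      exact (mem_support_iff.mp hβ) h1.symm
    -- the pick function
    have hpick : ∀ β ∈ (f a).support, ∃ i, i ∈ s ∧ c i ≤ β i := by
      intro β hβ; obtain ⟨i, hi, hci⟩ := hdiv β hβ; exact ⟨i, hi, hci⟩
    set pick : (σ →₀ ℕ) → σ := fun β =>
      if h : ∃ i, i ∈ s ∧ c i ≤ β i then h.choose else a with hpickdef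
    have hpick1 : ∀ β ∈ (f a).support, pick β ∈ s ∧ c (pick β) ≤ β (pick β) := by
      intro β hβ
      have h := hpick β hβ
      simp only [hpickdef, dif_pos h]
      exact h.choose_spec
    set u : σ → MvPolynomial σ K := fun i =>
      ∑ β ∈ (f a).support.filter (fun β => pick β = i),
        monomial (β - Finsupp.single i (c i)) (coeff β (f a)) with hu
    have hua : ∑ i ∈ s, u i * monomial (Finsupp.single i (c i)) 1 = f a := by
      have step1 : ∀ i ∈ s, u i * monomial (Finsupp.single i (c i)) 1
          = ∑ β ∈ (f a).support.filter (fun β => pick β = i),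
              monomial β (coeff β (f a)) := by
        intro i hi
        rw [hu]
        rw [Finset.sum_mul]
        apply Finset.sum_congr rfl
        intro β hβ
        rw [Finset.mem_filter] at hβ
        have hle : Finsupp.single i (c i) ≤ β := by
          have := hpick1 β hβ.1
          rw [hβ.2] at this
          exact Finsupp.single_le_iff.mpr this.2
        rw [monomial_mul, mul_one, tsub_add_cancel_of_le hle]
      rw [Finset.sum_congr rfl step1]
      rw [Finset.sum_fiberwise_of_maps_to (fun β hβ => (hpick1 β hβ).1)]
      exact support_sum_monomial_coeff (f a)
    -- new relation on s
    have hsum2 : ∑ i ∈ s, (f i + u i * monomial (Finsupp.single a (c a)) 1)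
        * monomial (Finsupp.single i (c i)) 1 = 0 := by
      have : ∑ i ∈ s, (f i + u i * monomial (Finsupp.single a (c a)) 1)
          * monomial (Finsupp.single i (c i)) 1
          = (∑ i ∈ s, f i * monomial (Finsupp.single i (c i)) 1)
            + (∑ i ∈ s, u i * monomial (Finsupp.single i (c i)) 1)
              * monomial (Finsupp.single a (c a)) 1 := by
        rw [Finset.sum_mul]
        rw [← Finset.sum_add_distrib]
        apply Finset.sum_congr rfl
        intro i _
        ring
      rw [this, hua]
      linear_combination hsum
    obtain ⟨h', hanti', hmain'⟩ := IH _ hsum2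
    refine ⟨fun i j =>
      if i = a then (if j = a then 0 else u j)
      else (if j = a then - u i else h' i j), ?_, ?_⟩
    · intro i j
      by_cases hia : i = a <;> by_cases hja : j = a <;> simp [hia, hja, hanti' i j]
    · intro i hi
      rw [Finset.mem_insert] at hi
      rcases hi with hi | hi
      · subst hi
        rw [Finset.sum_insert ha]
        simp only [eq_self_iff_true, ite_true]
        rw [zero_mul, zero_add]
        rw [← hua]
        apply Finset.sum_congr rfl
        intro j hj
        rw [if_neg (show ¬ j = i from fun h => ha (h ▸ hj))]
      · have hia : i ≠ a := fun h => ha (h ▸ hi)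
        rw [Finset.sum_insert ha]
        simp only [if_neg hia, eq_self_iff_true, ite_true]
        have heq : f i = (f i + u i * monomial (Finsupp.single a (c a)) 1)
            - u i * monomial (Finsupp.single a (c a)) 1 := by ring
        rw [heq, hmain' i hi]
        rw [neg_mul]
        have : ∑ j ∈ s, h' i j * monomial (Finsupp.single j (c j)) 1
            = ∑ j ∈ s, (if j = a then - u i else h' i j) * monomial (Finsupp.single j (c j)) 1 := by
          apply Finset.sum_congr rfl
          intro j hj
          have : j ≠ a := fun h => ha (h ▸ hj)
          rw [if_neg this]
        rw [← this]
        ring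


end Syz

section Crux
variable {n : ℕ} [NeZero n]


lemma crux (d : Fin n → ℕ) (hd : ∀ i, 2 ≤ d i) (δ : Fin n → ℂ)
    (φ : Fin n → MvPolynomial (Fin n) ℂ)
    (hφ : ∀ i, φ i = X i ^ d i - X (i + 1) - C (δ i) * X (i - 1)) :
    ∀ D : ℕ, ∀ g : Fin n → MvPolynomial (Fin n) ℂ,
      (∀ i, g i ≠ 0 → (g i).totalDegree + d i ≤ D) →
      (∀ β ∈ (∑ i, g i * φ i).support, ∀ i, β i < d i) →
      ∑ i, g i * φ i = 0 := by
  intro D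
  induction D using Nat.strong_induction_on with
  | _ D IH =>
  intro g hb hstd
  by_cases hall : ∀ i, g i = 0
  · apply Finset.sum_eq_zero; intro i _; rw [hall i, zero_mul]
  push_neg at hall
  obtain ⟨i₀, hi₀⟩ := hall
  have hD2 : 2 ≤ D := le_trans (le_trans (hd i₀) (Nat.le_add_left _ _)) (hb i₀ hi₀)
  set ℓ : Fin n → MvPolynomial (Fin n) ℂ := fun i => X (i + 1) + C (δ i) * X (i - 1) with hℓ
  have hφ' : ∀ i, φ i = monomial (Finsupp.single i (d i)) 1 - ℓ i := by
    intro i; rw [hφ i, ← X_pow_eq_monomial, hℓ]; ring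
  have hmono : ∀ j, (monomial (Finsupp.single j (d j)) (1:ℂ)) = φ j + ℓ j := by
    intro j; rw [hφ' j]; ring
  have hdegℓ : ∀ i, (ℓ i).totalDegree ≤ 1 := by
    intro i
    refine le_trans (totalDegree_add _ _) (max_le (le_of_eq (totalDegree_X _)) ?_)
    refine le_trans (totalDegree_mul _ _) ?_
    rw [totalDegree_C, totalDegree_X]
  set gh : Fin n → MvPolynomial (Fin n) ℂ := fun i => homogeneousComponent (D - d i) (g i)
    with hgh
  have step1 : homogeneousComponent D (∑ i, g i * φ i)
      = ∑ i, gh i * monomial (Finsupp.single i (d i)) 1 := by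
    rw [map_sum]
    apply Finset.sum_congr rfl
    intro i _
    by_cases hgi : g i = 0
    · simp [hgi, hgh]
    have hdle : d i ≤ D := le_trans (Nat.le_add_left _ _) (hb i hgi)
    rw [hφ' i, mul_sub, map_sub]
    rw [hc_mul_monomial, degree_single', if_pos hdle]
    have h0 : homogeneousComponent D (g i * ℓ i) = 0 := by
      apply homogeneousComponent_eq_zero
      refine lt_of_le_of_lt (totalDegree_mul _ _) ?_
      have h1 := hdegℓ i
      have h2 := hd i
      have h3 := hb i hgi
      omega
    rw [h0, sub_zero, hgh]
  have step2 : homogeneousComponent D (∑ i, g i * φ i) = 0 := by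
    by_contra h0
    have hne : (homogeneousComponent D (∑ i, g i * φ i)).support.Nonempty := by
      rw [Finset.nonempty_iff_ne_empty]; intro hh; exact h0 (support_eq_empty.mp hh)
    obtain ⟨β, hβ⟩ := hne
    have hβp : β ∈ (∑ i, g i * φ i).support := by
      rw [mem_support_iff] at hβ ⊢
      rw [coeff_homogeneousComponent] at hβ
      by_cases h : β.degree = D
      · rw [if_pos h] at hβ; exact hβ
      · rw [if_neg h] at hβ; exact absurd rfl hβ
    have hstdβ := hstd β hβp
    rw [step1, mem_support_iff, coeff_sum] at hβ
    obtain ⟨i, -, hci⟩ := Finset.exists_ne_zero_of_sum_ne_zero hβ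
    have hmem : β ∈ (gh i * monomial (Finsupp.single i (d i)) 1).support := mem_support_iff.mpr hci
    have hmem2 := support_mul _ _ hmem
    rw [Finset.mem_add] at hmem2
    obtain ⟨γ, hγ, μ, hμ, hβeq⟩ := hmem2
    have hμ' : μ = Finsupp.single i (d i) := by
      rw [support_monomial, if_neg one_ne_zero] at hμ
      exact Finset.mem_singleton.mp hμ
    have hge : d i ≤ β i := by
      rw [← hβeq, Finsupp.add_apply, hμ', Finsupp.single_apply, if_pos rfl]
      omega
    exact absurd hge (not_le.mpr (hstdβ i))
  have hkey : ∑ i, gh i * monomial (Finsupp.single i (d i)) 1 = 0 := by rw [← step1, step2]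
  obtain ⟨h', hanti, hmain⟩ := syzygy d Finset.univ gh (by simpa using hkey)
  set hh : Fin n → Fin n → MvPolynomial (Fin n) ℂ := fun i j =>
    if d i + d j ≤ D then homogeneousComponent (D - (d i + d j)) (h' i j) else 0 with hhh
  have hhanti : ∀ i j, hh i j = - hh j i := by
    intro i j
    simp only [hhh]
    rw [show d j + d i = d i + d j from Nat.add_comm _ _]
    by_cases hc : d i + d j ≤ D
    · rw [if_pos hc, if_pos hc, hanti i j, map_neg]
    · rw [if_neg hc, if_neg hc, neg_zero]
  have step3 : ∀ i, gh i = ∑ j, hh i j * monomial (Finsupp.single j (d j)) 1 := by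
    intro i
    have h1 := hmain i (Finset.mem_univ i)
    have h2 := congrArg (homogeneousComponent (D - d i)) h1
    simp only [hgh] at h2 ⊢
    rw [hc_hc] at h2
    rw [h2, map_sum]
    apply Finset.sum_congr rfl
    intro j _
    rw [hc_mul_monomial, degree_single']
    have hdj := hd j
    by_cases hc : d i + d j ≤ D
    · rw [if_pos (show d j ≤ D - d i by omega)]
      rw [show D - d i - d j = D - (d i + d j) by omega]
      simp only [hhh]
      rw [if_pos hc]
    · rw [if_neg (show ¬ d j ≤ D - d i by omega), hhh]
      simp only
      rw [if_neg hc, zero_mul]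
  set g' : Fin n → MvPolynomial (Fin n) ℂ := fun i => (g i - gh i) + ∑ j, hh i j * ℓ j with hg'
  -- the antisymmetric double sum vanishes
  have e2 : ∑ i, ∑ j, hh i j * φ j * φ i = 0 := by
    set S := ∑ i, ∑ j, hh i j * φ j * φ i with hS
    have hneg : S = - S := by
      conv_lhs => rw [hS, Finset.sum_comm]
      rw [hS, ← Finset.sum_neg_distrib]
      apply Finset.sum_congr rfl
      intro j _
      rw [← Finset.sum_neg_distrib]
      apply Finset.sum_congr rfl
      intro i _
      rw [hhanti i j]
      ring
    have h2 : C (2:ℂ) * S = 0 := by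
      have : S + S = 0 := by nth_rewrite 1 [hneg]; ring
      rw [show C (2:ℂ) * S = S + S by rw [map_ofNat]; ring]
      exact this
    rcases mul_eq_zero.mp h2 with h | h
    · exfalso
      have : (2:ℂ) = 0 := by
        have := MvPolynomial.C_injective (Fin n) ℂ
        exact this (by rw [h, map_zero])
      norm_num at this
    · exact h
  have step4 : ∑ i, g' i * φ i = ∑ i, g i * φ i := by
    have expand : ∀ i, g' i * φ i
        = g i * φ i - gh i * φ i + ∑ j, hh i j * ℓ j * φ i := by
      intro i
      simp only [hg']
      rw [add_mul, sub_mul, Finset.sum_mul]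
    rw [Finset.sum_congr rfl fun i _ => expand i]
    rw [Finset.sum_add_distrib, Finset.sum_sub_distrib]
    have e1 : ∑ i, gh i * φ i
        = ∑ i, ∑ j, hh i j * φ j * φ i + ∑ i, ∑ j, hh i j * ℓ j * φ i := by
      rw [← Finset.sum_add_distrib]
      apply Finset.sum_congr rfl
      intro i _
      rw [step3 i, Finset.sum_mul, ← Finset.sum_add_distrib]
      apply Finset.sum_congr rfl
      intro j _
      rw [hmono j]
      ring
    rw [e1, e2, zero_add]
    ring
  have hb' : ∀ i, g' i ≠ 0 → (g' i).totalDegree + d i ≤ D - 1 := by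
    intro i hne
    by_cases hdi : d i + 1 ≤ D
    · have hbound : (g' i).totalDegree ≤ D - 1 - d i := by
        simp only [hg']
        refine le_trans (totalDegree_add _ _) (max_le ?_ ?_)
        · by_cases ht : g i - gh i = 0
          · rw [ht, totalDegree_zero]; exact Nat.zero_le _
          · have hgi : g i ≠ 0 := by
              intro h0
              apply ht
              simp only [hgh]
              rw [h0, map_zero, sub_zero]
            have hgd : (g i).totalDegree ≤ D - d i := by have := hb i hgi; omega
            have hdegsub : (g i - gh i).totalDegree ≤ D - d i := by
              rw [sub_eq_add_neg]
              refine le_trans (totalDegree_add _ _) (max_le hgd ?_)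
              rw [totalDegree_neg]
              simp only [hgh]
              exact totalDegree_hc_le _ _
            have hhczero : homogeneousComponent (D - d i) (g i - gh i) = 0 := by
              rw [map_sub]
              simp only [hgh]
              rw [hc_hc, sub_self]
            have := totalDegree_lt_of_hc_zero ht hdegsub hhczero
            omega
        · refine le_trans (totalDegree_finset_sum _ _) ?_
          apply Finset.sup_le
          intro j _
          by_cases hc : d i + d j ≤ D
          · refine le_trans (totalDegree_mul _ _) ?_
            have h1 : (hh i j).totalDegree ≤ D - (d i + d j) := by
              simp only [hhh]
              rw [if_pos hc]
              exact totalDegree_hc_le _ _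
            have h2 := hdegℓ j
            have h3 := hd j
            omega
          · simp only [hhh]
            rw [if_neg hc, zero_mul, totalDegree_zero]
            exact Nat.zero_le _
      omega
    · exfalso
      apply hne
      have hg0 : g i - gh i = 0 := by
        by_cases hgi : g i = 0
        · simp only [hgh]
          rw [hgi, map_zero, sub_zero]
        · have hdeg0 : (g i).totalDegree = 0 := by have := hb i hgi; omega
          have hD0 : D - d i = 0 := by have := hb i hgi; omega
          have hhom := (totalDegree_zero_iff_isHomogeneous (p := g i)).mp hdeg0
          simp only [hgh]
          rw [hD0, homogeneousComponent_of_mem ((mem_homogeneousSubmodule _ _).mpr hhom),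
            if_pos rfl, sub_self]
      simp only [hg']
      rw [hg0, zero_add]
      apply Finset.sum_eq_zero
      intro j _
      simp only [hhh]
      rw [if_neg (show ¬ d i + d j ≤ D by have := hd j; omega), zero_mul]
  have hfinal := IH (D - 1) (by omega) g' hb' (by rw [step4]; exact hstd)
  rw [step4] at hfinal
  exact hfinal


end Crux

end Stmt9Aux

namespace Stmt9M


variable {n : ℕ} [NeZero n] (d : Fin n → ℕ) (δ : Fin n → ℂ)

noncomputable def L (j : Fin n) : Matrix (Fin 2) (Fin 2) (MvPolynomial (Fin n) ℂ) :=
  !![0, 1; -C (δ j), C (d j : ℂ) * X j ^ (d j - 1)]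

noncomputable def R : ℕ → Matrix (Fin 2) (Fin 2) (MvPolynomial (Fin n) ℂ)
  | 0 => 1
  | t + 1 => R t * L d δ ((n - 1 - t : ℕ) : Fin n)

noncomputable def W : ℕ → Matrix (Fin 2) (Fin 2) (MvPolynomial (Fin n) ℂ)
  | 0 => 1
  | m + 1 => L d δ ((m + 1 : ℕ) : Fin n) * W m

@[simp] lemma L00 (j) : L d δ j 0 0 = 0 := by simp [L]
@[simp] lemma L01 (j) : L d δ j 0 1 = 1 := by simp [L]
@[simp] lemma L10 (j) : L d δ j 1 0 = - C (δ j) := by simp [L]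
@[simp] lemma L11 (j) : L d δ j 1 1 = C (d j : ℂ) * X j ^ (d j - 1) := by simp [L]

lemma mul_apply2 (A B : Matrix (Fin 2) (Fin 2) (MvPolynomial (Fin n) ℂ)) (i k : Fin 2) :
    (A * B) i k = A i 0 * B 0 k + A i 1 * B 1 k := by
  rw [Matrix.mul_apply, Fin.sum_univ_two]

lemma cast_eq_mk {k : ℕ} (h : k < n) : ((k : ℕ) : Fin n) = ⟨k, h⟩ := by
  apply Fin.ext
  rw [Fin.val_natCast, Nat.mod_eq_of_lt h]

lemma cast_val {k : ℕ} (h : k < n) : (((k : ℕ) : Fin n) : ℕ) = k := by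
  rw [cast_eq_mk h]

lemma cast_add_one (k : ℕ) : ((k : ℕ) : Fin n) + 1 = ((k + 1 : ℕ) : Fin n) := by
  push_cast
  ring

lemma cast_n_eq_zero : ((n : ℕ) : Fin n) = 0 := by
  apply Fin.ext
  rw [Fin.val_natCast, Nat.mod_self, Fin.val_zero]

-- M equals R n
lemma list_prod_eq (t : ℕ) (ht : t ≤ n) :
    ((List.ofFn (L d δ)).drop (n - t)).reverse.prod = R d δ t := by
  induction t with
  | zero =>
    rw [Nat.sub_zero, List.drop_eq_nil_of_le (le_of_eq List.length_ofFn)]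
    simp [R]
  | succ t IH =>
    have hlt : n - (t + 1) < (List.ofFn (L d δ)).length := by
      rw [List.length_ofFn]; omega
    rw [List.drop_eq_getElem_cons hlt, List.reverse_cons, List.prod_append,
      List.prod_singleton]
    rw [show n - (t + 1) + 1 = n - t by omega]
    rw [IH (by omega)]
    rw [show R d δ (t + 1) = R d δ t * L d δ ((n - 1 - t : ℕ) : Fin n) from rfl]
    congr 1
    rw [List.getElem_ofFn]
    rw [cast_eq_mk (show n - 1 - t < n by omega)]
    apply congrArg
    exact Fin.ext (show n - (t + 1) = n - 1 - t by omega)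

lemma M_eq_R :
    ((List.ofFn (L d δ)).reverse).prod = R d δ n := by
  have := list_prod_eq d δ n le_rfl
  rwa [Nat.sub_self, List.drop_zero] at this

lemma RW_aux (t : ℕ) (ht : t ≤ n - 1) :
    R d δ t * W d δ (n - 1 - t) = W d δ (n - 1) := by
  induction t with
  | zero => rw [show R d δ 0 = 1 from rfl, one_mul, Nat.sub_zero]
  | succ t IH =>
    have h1 : n - 1 - (t + 1) = n - 2 - t := by omega
    have h2 : W d δ (n - 1 - t) = L d δ ((n - 1 - t : ℕ) : Fin n) * W d δ (n - 2 - t) := by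
      conv_lhs => rw [show n - 1 - t = (n - 2 - t) + 1 by omega]
      rw [show W d δ ((n - 2 - t) + 1) = L d δ ((n - 2 - t + 1 : ℕ) : Fin n) * W d δ (n - 2 - t)
        from rfl]
      rw [show (n - 2 - t + 1 : ℕ) = n - 1 - t by omega]
    rw [show R d δ (t + 1) = R d δ t * L d δ ((n - 1 - t : ℕ) : Fin n) from rfl]
    rw [h1, Matrix.mul_assoc, ← h2, IH (by omega)]

lemma R_eq_W : R d δ (n - 1) = W d δ (n - 1) := by
  have := RW_aux d δ (n - 1) le_rfl
  rwa [Nat.sub_self, show W d δ 0 = 1 from rfl, mul_one] at this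


-- support tools
lemma fin2cases (i : Fin 2) : i = 0 ∨ i = 1 := by fin_cases i <;> simp

lemma supp_smulC {c : ℂ} {q : MvPolynomial (Fin n) ℂ} {β : Fin n →₀ ℕ}
    (h : β ∈ (C c * q).support) : β ∈ q.support := by
  rw [C_mul'] at h
  exact support_smul h

lemma supp_negC {c : ℂ} {q : MvPolynomial (Fin n) ℂ} {β : Fin n →₀ ℕ}
    (h : β ∈ ((- C c) * q).support) : β ∈ q.support := by
  rw [show ((- C c) * q : MvPolynomial (Fin n) ℂ) = C (-c) * q by rw [map_neg]] at h
  exact supp_smulC h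

lemma supp_CXpow_mul {c : ℂ} {j : Fin n} {e : ℕ} {q : MvPolynomial (Fin n) ℂ} {β : Fin n →₀ ℕ}
    (h : β ∈ ((C c * X j ^ e) * q).support) :
    ∃ γ ∈ q.support, β = Finsupp.single j e + γ := by
  have h2 := MvPolynomial.support_mul _ _ h
  rw [Finset.mem_add] at h2
  obtain ⟨μ, hμ, γ, hγ, hβ⟩ := h2
  rw [C_mul_X_pow_eq_monomial] at hμ
  have := MvPolynomial.support_monomial_subset hμ
  rw [Finset.mem_singleton] at this
  exact ⟨γ, hγ, by rw [← hβ, this]⟩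

lemma supp_one' {β : Fin n →₀ ℕ} (h : β ∈ (1 : MvPolynomial (Fin n) ℂ).support) : β = 0 := by
  have := MvPolynomial.support_monomial_subset (s := 0) (a := (1:ℂ)) (by rwa [monomial_zero', C_1])
  rw [Finset.mem_singleton] at this
  exact this

lemma mem_add_support {p q : MvPolynomial (Fin n) ℂ} {β : Fin n →₀ ℕ}
    (h : β ∈ (p + q).support) : β ∈ p.support ∨ β ∈ q.support := by
  have := MvPolynomial.support_add (p := p) (q := q) h
  rwa [Finset.mem_union] at this

lemma suppW (hd : ∀ i, 2 ≤ d i) :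
    ∀ m, m ≤ n - 1 → ∀ (i k : Fin 2), ∀ β ∈ ((W d δ m) i k).support,
      β 0 = 0 ∧ (∀ j : Fin n, β j ≤ d j - 1) ∧ (∀ j : Fin n, m < (j : ℕ) → β j = 0) := by
  intro m
  induction m with
  | zero =>
    intro _ i k β hβ
    rw [show W d δ 0 = 1 from rfl, Matrix.one_apply] at hβ
    by_cases hik : i = k
    · rw [if_pos hik] at hβ
      have hβ0 : β = 0 := supp_one' hβ
      subst hβ0
      refine ⟨rfl, fun j => by simp, fun j _ => rfl⟩
    · rw [if_neg hik] at hβ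
      simp at hβ
  | succ m IH =>
    intro hm i k β hβ
    have hm' : m ≤ n - 1 := by omega
    have hmlt : m + 1 < n := by omega
    have hlabv : (((m + 1 : ℕ) : Fin n) : ℕ) = m + 1 := cast_val hmlt
    have hlab0 : ((m + 1 : ℕ) : Fin n) ≠ 0 := by
      intro h
      rw [h, Fin.val_zero] at hlabv
      omega
    rw [show W d δ (m + 1) = L d δ ((m + 1 : ℕ) : Fin n) * W d δ m from rfl,
      mul_apply2] at hβ
    rcases mem_add_support hβ with h | h
    · rcases fin2cases i with rfl | rfl
      · rw [L00, zero_mul] at h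
        simp at h
      · rw [L10] at h
        obtain ⟨h0, hb, hw⟩ := IH hm' 0 k β (supp_negC h)
        exact ⟨h0, hb, fun j hj => hw j (by omega)⟩
    · rcases fin2cases i with rfl | rfl
      · rw [L01, one_mul] at h
        obtain ⟨h0, hb, hw⟩ := IH hm' 1 k β h
        exact ⟨h0, hb, fun j hj => hw j (by omega)⟩
      · rw [L11] at h
        obtain ⟨γ, hγ, hβeq⟩ := supp_CXpow_mul h
        obtain ⟨h0, hb, hw⟩ := IH hm' 1 k γ hγ
        subst hβeq
        refine ⟨?_, ?_, ?_⟩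
        · rw [Finsupp.add_apply, Finsupp.single_apply,
            if_neg hlab0, zero_add, h0]
        · intro j
          rw [Finsupp.add_apply, Finsupp.single_apply]
          by_cases hj : ((m + 1 : ℕ) : Fin n) = j
          · rw [if_pos hj, ← hj]
            have : γ (((m + 1 : ℕ) : Fin n)) = 0 := hw _ (by rw [hlabv]; omega)
            rw [this, add_zero]
          · rw [if_neg hj, zero_add]
            exact hb j
        · intro j hj
          have hjlab : ((m + 1 : ℕ) : Fin n) ≠ j := by
            intro hc
            rw [← hc, hlabv] at hj
            omega
          rw [Finsupp.add_apply, Finsupp.single_apply, if_neg hjlab, zero_add]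
          exact hw j (by omega)

lemma suppR (hd : ∀ i, 2 ≤ d i) :
    ∀ t, t ≤ n - 1 → ∀ (i k : Fin 2), ∀ β ∈ ((R d δ t) i k).support,
      (∀ j : Fin n, β j ≤ d j - 1) ∧ (∀ j : Fin n, (j : ℕ) < n - t → β j = 0) := by
  intro t
  induction t with
  | zero =>
    intro _ i k β hβ
    rw [show R d δ 0 = 1 from rfl, Matrix.one_apply] at hβ
    by_cases hik : i = k
    · rw [if_pos hik] at hβ
      have hβ0 : β = 0 := supp_one' hβ
      subst hβ0
      exact ⟨fun j => by simp, fun j _ => rfl⟩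
    · rw [if_neg hik] at hβ
      simp at hβ
  | succ t IH =>
    intro ht i k β hβ
    have ht' : t ≤ n - 1 := by omega
    have hltn : n - 1 - t < n := by omega
    have hlabv : (((n - 1 - t : ℕ) : Fin n) : ℕ) = n - 1 - t := cast_val hltn
    rw [show R d δ (t + 1) = R d δ t * L d δ ((n - 1 - t : ℕ) : Fin n) from rfl,
      mul_apply2] at hβ
    rcases mem_add_support hβ with h | h
    · rcases fin2cases k with rfl | rfl
      · rw [L00, mul_zero] at h
        simp at h
      · rw [L01, mul_one] at h
        obtain ⟨hb, hw⟩ := IH ht' i 0 β h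
        exact ⟨hb, fun j hj => hw j (by omega)⟩
    · rcases fin2cases k with rfl | rfl
      · rw [L10] at h
        rw [show ((R d δ t) i 1 * - C (δ ((n - 1 - t : ℕ) : Fin n)))
            = (- C (δ ((n - 1 - t : ℕ) : Fin n))) * (R d δ t) i 1 by ring] at h
        obtain ⟨hb, hw⟩ := IH ht' i 1 β (supp_negC h)
        exact ⟨hb, fun j hj => hw j (by omega)⟩
      · rw [L11] at h
        rw [show ((R d δ t) i 1 * (C ((d ((n - 1 - t : ℕ) : Fin n)) : ℂ)
              * X ((n - 1 - t : ℕ) : Fin n) ^ (d ((n - 1 - t : ℕ) : Fin n) - 1)))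
            = (C ((d ((n - 1 - t : ℕ) : Fin n)) : ℂ)
              * X ((n - 1 - t : ℕ) : Fin n) ^ (d ((n - 1 - t : ℕ) : Fin n) - 1))
              * (R d δ t) i 1 by ring] at h
        obtain ⟨γ, hγ, hβeq⟩ := supp_CXpow_mul h
        obtain ⟨hb, hw⟩ := IH ht' i 1 γ hγ
        subst hβeq
        constructor
        · intro j
          rw [Finsupp.add_apply, Finsupp.single_apply]
          by_cases hj : ((n - 1 - t : ℕ) : Fin n) = j
          · rw [if_pos hj, ← hj]
            have : γ (((n - 1 - t : ℕ) : Fin n)) = 0 := hw _ (by rw [hlabv]; omega)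
            rw [this, add_zero]
          · rw [if_neg hj, zero_add]
            exact hb j
        · intro j hj
          have hjlab : ((n - 1 - t : ℕ) : Fin n) ≠ j := by
            intro hc
            rw [← hc, hlabv] at hj
            omega
          rw [Finsupp.add_apply, Finsupp.single_apply, if_neg hjlab, zero_add]
          exact hw j (by omega)

lemma col0W (hn : 3 ≤ n) :
    ∀ m, m ≤ n - 1 → ∀ i : Fin 2, ∀ β ∈ ((W d δ m) i 0).support, β (1 : Fin n) = 0 := by
  intro m
  induction m with
  | zero =>
    intro _ i β hβ
    rw [show W d δ 0 = 1 from rfl, Matrix.one_apply] at hβ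
    by_cases hik : i = 0
    · rw [if_pos hik] at hβ
      rw [supp_one' hβ]
      rfl
    · rw [if_neg hik] at hβ
      simp at hβ
  | succ m IH =>
    intro hm i β hβ
    have hm' : m ≤ n - 1 := by omega
    have hmlt : m + 1 < n := by omega
    have hlabv : (((m + 1 : ℕ) : Fin n) : ℕ) = m + 1 := cast_val hmlt
    rw [show W d δ (m + 1) = L d δ ((m + 1 : ℕ) : Fin n) * W d δ m from rfl,
      mul_apply2] at hβ
    rcases mem_add_support hβ with h | h
    · rcases fin2cases i with rfl | rfl
      · rw [L00, zero_mul] at h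
        simp at h
      · rw [L10] at h
        exact IH hm' 0 β (supp_negC h)
    · rcases fin2cases i with rfl | rfl
      · rw [L01, one_mul] at h
        exact IH hm' 1 β h
      · rw [L11] at h
        rcases Nat.eq_zero_or_pos m with hm0 | hm0
        · subst hm0
          rw [show (W d δ 0) 1 0 = 0 from by
              rw [show W d δ 0 = 1 from rfl]; exact Matrix.one_apply_ne (by decide),
            mul_zero] at h
          simp at h
        · obtain ⟨γ, hγ, hβeq⟩ := supp_CXpow_mul h
          subst hβeq
          rw [Finsupp.add_apply, Finsupp.single_apply]
          rw [if_neg, zero_add]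
          · exact IH hm' 1 γ hγ
          · intro hc
            have h1 : ((1 : Fin n) : ℕ) = 1 := by
              rw [show (1 : Fin n) = ((1 : ℕ) : Fin n) from (Nat.cast_one).symm]
              exact cast_val (by omega)
            rw [← hc, hlabv] at h1
            omega



noncomputable def SR : ℕ → MvPolynomial (Fin n) ℂ
  | 0 => X 0
  | t + 1 => X ((n - 1 - t : ℕ) : Fin n) * (R d δ t) 1 0
      + C ((d ((n - 1 - t : ℕ) : Fin n)) : ℂ) *
        (SR t + C (δ ((n - 1 - t : ℕ) : Fin n)) *
          (X ((n - 2 - t : ℕ) : Fin n) * (R d δ t) 1 1))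

noncomputable def SQ : ℕ → MvPolynomial (Fin n) ℂ
  | 0 => X 0
  | m + 1 => - C (δ ((m + 1 : ℕ) : Fin n)) * (X ((m + 1 : ℕ) : Fin n) * (W d δ m) 0 1)
      + C ((d ((m + 1 : ℕ) : Fin n)) : ℂ) * (X ((m + 2 : ℕ) : Fin n) * (W d δ m) 1 1)
      + C ((d ((m + 1 : ℕ) : Fin n)) : ℂ) * C (δ ((m + 1 : ℕ) : Fin n)) * SQ m

lemma chainR (hd : ∀ i, 2 ≤ d i)
    (φ : Fin n → MvPolynomial (Fin n) ℂ)
    (hφ : ∀ i, φ i = X i ^ d i - X (i + 1) - C (δ i) * X (i - 1)) :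
    ∀ t, t ≤ n - 1 →
      X ((n - t : ℕ) : Fin n) * (R d δ t) 1 1 - SR d δ t ∈ Ideal.span (Set.range φ) := by
  intro t
  induction t with
  | zero =>
    intro _
    rw [Nat.sub_zero, cast_n_eq_zero, show R d δ 0 = 1 from rfl, Matrix.one_apply_eq, mul_one,
      show SR d δ 0 = X 0 from rfl, sub_self]
    exact Ideal.zero_mem _
  | succ t IH =>
    intro ht
    have hjv : ((((n - 1 - t : ℕ) : Fin n)) : ℕ) = n - 1 - t := cast_val (by omega)
    have e1 : ((n - 1 - t : ℕ) : Fin n) + 1 = ((n - t : ℕ) : Fin n) := by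
      rw [cast_add_one]
      congr 1
      omega
    have e2 : ((n - 1 - t : ℕ) : Fin n) - 1 = ((n - 2 - t : ℕ) : Fin n) := by
      have h : ((n - 2 - t : ℕ) : Fin n) + 1 = ((n - 1 - t : ℕ) : Fin n) := by
        rw [cast_add_one]; congr 1; omega
      rw [← h]; exact add_sub_cancel_right _ _
    have hφj : φ ((n - 1 - t : ℕ) : Fin n)
        = X ((n - 1 - t : ℕ) : Fin n) * X ((n - 1 - t : ℕ) : Fin n)
            ^ (d ((n - 1 - t : ℕ) : Fin n) - 1)
          - X ((n - t : ℕ) : Fin n)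
          - C (δ ((n - 1 - t : ℕ) : Fin n)) * X ((n - 2 - t : ℕ) : Fin n) := by
      rw [hφ _, e1, e2]
      rw [show X ((n - 1 - t : ℕ) : Fin n) ^ (d ((n - 1 - t : ℕ) : Fin n))
          = X ((n - 1 - t : ℕ) : Fin n) * X ((n - 1 - t : ℕ) : Fin n)
              ^ (d ((n - 1 - t : ℕ) : Fin n) - 1) by
        rw [← pow_succ']
        congr 1
        have := hd (((n - 1 - t : ℕ) : Fin n))
        omega]
    have hkey : X ((n - 1 - t : ℕ) : Fin n) * (R d δ (t + 1)) 1 1 - SR d δ (t + 1)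
        = (C ((d ((n - 1 - t : ℕ) : Fin n)) : ℂ) * (R d δ t) 1 1) * φ ((n - 1 - t : ℕ) : Fin n)
          + C ((d ((n - 1 - t : ℕ) : Fin n)) : ℂ)
            * (X ((n - t : ℕ) : Fin n) * (R d δ t) 1 1 - SR d δ t) := by
      rw [show R d δ (t + 1) = R d δ t * L d δ ((n - 1 - t : ℕ) : Fin n) from rfl,
        mul_apply2, L01, L11]
      rw [show SR d δ (t + 1) = X ((n - 1 - t : ℕ) : Fin n) * (R d δ t) 1 0
          + C ((d ((n - 1 - t : ℕ) : Fin n)) : ℂ) *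
            (SR d δ t + C (δ ((n - 1 - t : ℕ) : Fin n)) *
              (X ((n - 2 - t : ℕ) : Fin n) * (R d δ t) 1 1)) from rfl]
      rw [hφj]
      ring
    rw [show n - (t + 1) = n - 1 - t by omega, hkey]
    exact Ideal.add_mem _
      (Ideal.mul_mem_left _ _ (Ideal.subset_span ⟨_, rfl⟩))
      (Ideal.mul_mem_left _ _ (IH (by omega)))

lemma chainQ (hd : ∀ i, 2 ≤ d i)
    (φ : Fin n → MvPolynomial (Fin n) ℂ)
    (hφ : ∀ i, φ i = X i ^ d i - X (i + 1) - C (δ i) * X (i - 1)) :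
    ∀ m, m ≤ n - 1 →
      X ((m : ℕ) : Fin n) * (W d δ m) 1 1 - SQ d δ m ∈ Ideal.span (Set.range φ) := by
  intro m
  induction m with
  | zero =>
    intro _
    rw [Nat.cast_zero, show W d δ 0 = 1 from rfl, Matrix.one_apply_eq, mul_one,
      show SQ d δ 0 = X 0 from rfl, sub_self]
    exact Ideal.zero_mem _
  | succ m IH =>
    intro hm
    have hjv : ((((m + 1 : ℕ) : Fin n)) : ℕ) = m + 1 := cast_val (by omega)
    have e1 : ((m + 1 : ℕ) : Fin n) + 1 = ((m + 2 : ℕ) : Fin n) := by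
      rw [cast_add_one]
    have e2 : ((m + 1 : ℕ) : Fin n) - 1 = ((m : ℕ) : Fin n) := by
      have h : ((m : ℕ) : Fin n) + 1 = ((m + 1 : ℕ) : Fin n) := by
        rw [cast_add_one]
      rw [← h]; exact add_sub_cancel_right _ _
    have hφj : φ ((m + 1 : ℕ) : Fin n)
        = X ((m + 1 : ℕ) : Fin n) * X ((m + 1 : ℕ) : Fin n) ^ (d ((m + 1 : ℕ) : Fin n) - 1)
          - X ((m + 2 : ℕ) : Fin n)
          - C (δ ((m + 1 : ℕ) : Fin n)) * X ((m : ℕ) : Fin n) := by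
      rw [hφ _, e1, e2]
      rw [show X ((m + 1 : ℕ) : Fin n) ^ (d ((m + 1 : ℕ) : Fin n))
          = X ((m + 1 : ℕ) : Fin n) * X ((m + 1 : ℕ) : Fin n)
              ^ (d ((m + 1 : ℕ) : Fin n) - 1) by
        rw [← pow_succ']
        congr 1
        have := hd (((m + 1 : ℕ) : Fin n))
        omega]
    have hkey : X ((m + 1 : ℕ) : Fin n) * (W d δ (m + 1)) 1 1 - SQ d δ (m + 1)
        = (C ((d ((m + 1 : ℕ) : Fin n)) : ℂ) * (W d δ m) 1 1) * φ ((m + 1 : ℕ) : Fin n)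
          + C ((d ((m + 1 : ℕ) : Fin n)) : ℂ) * C (δ ((m + 1 : ℕ) : Fin n))
            * (X ((m : ℕ) : Fin n) * (W d δ m) 1 1 - SQ d δ m) := by
      rw [show W d δ (m + 1) = L d δ ((m + 1 : ℕ) : Fin n) * W d δ m from rfl,
        mul_apply2, L10, L11]
      rw [show SQ d δ (m + 1)
          = - C (δ ((m + 1 : ℕ) : Fin n)) * (X ((m + 1 : ℕ) : Fin n) * (W d δ m) 0 1)
          + C ((d ((m + 1 : ℕ) : Fin n)) : ℂ) * (X ((m + 2 : ℕ) : Fin n) * (W d δ m) 1 1)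
          + C ((d ((m + 1 : ℕ) : Fin n)) : ℂ) * C (δ ((m + 1 : ℕ) : Fin n)) * SQ d δ m from rfl]
      rw [hφj]
      ring
    rw [hkey]
    exact Ideal.add_mem _
      (Ideal.mul_mem_left _ _ (Ideal.subset_span ⟨_, rfl⟩))
      (Ideal.mul_mem_left _ _ (IH (by omega)))



lemma supp_X_mul {j : Fin n} {q : MvPolynomial (Fin n) ℂ} {β : Fin n →₀ ℕ}
    (h : β ∈ (X j * q).support) : ∃ γ ∈ q.support, β = Finsupp.single j 1 + γ := by
  rw [show (X j * q : MvPolynomial (Fin n) ℂ) = (C 1 * X j ^ 1) * q by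
    rw [C_1, one_mul, pow_one]] at h
  exact supp_CXpow_mul h

lemma val_one3 (hn : 3 ≤ n) : ((1 : Fin n) : ℕ) = 1 := by
  rw [show (1 : Fin n) = ((1 : ℕ) : Fin n) from (Nat.cast_one).symm]
  exact cast_val (by omega)

noncomputable def tau : ℕ → (Fin n →₀ ℕ) := fun m =>
  ∑ j ∈ Finset.Icc 1 m, Finsupp.single ((j : ℕ) : Fin n) (d ((j : ℕ) : Fin n) - 1)

lemma tau_zero : tau d 0 = 0 := by
  rw [tau, Finset.Icc_eq_empty (by omega), Finset.sum_empty]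

lemma tau_succ (m : ℕ) : tau d (m + 1)
    = tau d m + Finsupp.single ((m + 1 : ℕ) : Fin n) (d ((m + 1 : ℕ) : Fin n) - 1) := by
  rw [tau, tau, Finset.sum_Icc_succ_top (by omega)]

lemma tauval : ∀ m, m ≤ n - 1 → ∀ i : Fin n,
    tau d m i = if (i : ℕ) ∈ Finset.Icc 1 m then d i - 1 else 0 := by
  intro m
  induction m with
  | zero =>
    intro _ i
    rw [tau_zero, if_neg (by simp)]
    rfl
  | succ m IH =>
    intro hm i
    have hmlt : m + 1 < n := by omega
    have hlabv : (((m + 1 : ℕ) : Fin n) : ℕ) = m + 1 := cast_val hmlt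
    rw [tau_succ, Finsupp.add_apply, IH (by omega) i, Finsupp.single_apply]
    by_cases hi : (i : ℕ) = m + 1
    · have hieq : ((m + 1 : ℕ) : Fin n) = i := by
        apply Fin.ext
        rw [hlabv, hi]
      rw [if_neg (by rw [Finset.mem_Icc]; omega), if_pos hieq, if_pos (by rw [Finset.mem_Icc]; omega),
        zero_add, hieq]
    · have hine : ((m + 1 : ℕ) : Fin n) ≠ i := by
        intro hc
        rw [← hc, hlabv] at hi
        exact hi rfl
      rw [if_neg hine, add_zero]
      by_cases hmem : (i : ℕ) ∈ Finset.Icc 1 m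
      · rw [if_pos hmem, if_pos (by rw [Finset.mem_Icc] at hmem ⊢; omega)]
      · rw [if_neg hmem, if_neg (by rw [Finset.mem_Icc] at hmem ⊢; omega)]

lemma topW (hd : ∀ i, 2 ≤ d i) : ∀ m, m ≤ n - 2 →
    coeff (tau d m) ((W d δ m) 1 1) = ∏ j ∈ Finset.Icc 1 m, ((d ((j : ℕ) : Fin n)) : ℂ) := by
  intro m
  induction m with
  | zero =>
    intro _
    rw [tau_zero, show W d δ 0 = 1 from rfl, Matrix.one_apply_eq,
      Finset.Icc_eq_empty (by omega), Finset.prod_empty]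
    exact coeff_zero_one
  | succ m IH =>
    intro hm
    have hmlt : m + 1 < n := by omega
    have hlabv : (((m + 1 : ℕ) : Fin n) : ℕ) = m + 1 := cast_val hmlt
    rw [show W d δ (m + 1) = L d δ ((m + 1 : ℕ) : Fin n) * W d δ m from rfl,
      mul_apply2, L10, L11, coeff_add]
    have hz : coeff (tau d (m + 1)) (- C (δ ((m + 1 : ℕ) : Fin n)) * (W d δ m) 0 1) = 0 := by
      rw [show (- C (δ ((m + 1 : ℕ) : Fin n)) * (W d δ m) 0 1 : MvPolynomial (Fin n) ℂ)
          = C (- δ ((m + 1 : ℕ) : Fin n)) * (W d δ m) 0 1 by rw [map_neg], coeff_C_mul]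
      have hns : tau d (m + 1) ∉ ((W d δ m) 0 1).support := by
        intro hmem
        obtain ⟨-, -, hw⟩ := suppW d δ hd m (by omega) 0 1 _ hmem
        have h1 := hw ((m + 1 : ℕ) : Fin n) (by rw [hlabv]; omega)
        rw [tauval d (m + 1) (by omega)] at h1
        rw [if_pos (by rw [hlabv, Finset.mem_Icc]; omega)] at h1
        have := hd (((m + 1 : ℕ) : Fin n))
        omega
      rw [notMem_support_iff.mp hns, mul_zero]
    rw [hz, zero_add, C_mul_X_pow_eq_monomial, coeff_monomial_mul']
    rw [if_pos (by
      rw [Finsupp.single_le_iff, tauval d (m + 1) (by omega)]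
      rw [if_pos (by rw [hlabv, Finset.mem_Icc]; omega)])]
    rw [tau_succ, add_tsub_cancel_right, IH (by omega), Finset.prod_Icc_succ_top (by omega)]
    ring

lemma stdSR (hd : ∀ i, 2 ≤ d i) : ∀ t, t ≤ n - 1 →
    ∀ β ∈ (SR d δ t).support, ∀ i, β i < d i := by
  intro t
  induction t with
  | zero =>
    intro _ β hβ i
    rw [show SR d δ 0 = X 0 from rfl] at hβ
    obtain ⟨γ, hγ, hβeq⟩ := supp_X_mul (j := 0) (q := 1) (by rwa [mul_one])
    rw [supp_one' hγ, add_zero] at hβeq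
    subst hβeq
    rw [Finsupp.single_apply]
    by_cases hi : (0 : Fin n) = i
    · rw [if_pos hi]; have := hd i; omega
    · rw [if_neg hi]; have := hd i; omega
  | succ t IH =>
    intro ht β hβ
    have hlabv : ((((n - 1 - t : ℕ) : Fin n)) : ℕ) = n - 1 - t := cast_val (by omega)
    have hlab2v : ((((n - 2 - t : ℕ) : Fin n)) : ℕ) = n - 2 - t := cast_val (by omega)
    rw [show SR d δ (t + 1) = X ((n - 1 - t : ℕ) : Fin n) * (R d δ t) 1 0
        + C ((d ((n - 1 - t : ℕ) : Fin n)) : ℂ) *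
          (SR d δ t + C (δ ((n - 1 - t : ℕ) : Fin n)) *
            (X ((n - 2 - t : ℕ) : Fin n) * (R d δ t) 1 1)) from rfl] at hβ
    rcases mem_add_support hβ with h | h
    · obtain ⟨γ, hγ, hβeq⟩ := supp_X_mul h
      obtain ⟨hb, hw⟩ := suppR d δ hd t (by omega) 1 0 γ hγ
      subst hβeq
      intro i
      rw [Finsupp.add_apply, Finsupp.single_apply]
      by_cases hi : ((n - 1 - t : ℕ) : Fin n) = i
      · rw [if_pos hi, ← hi, hw _ (by rw [hlabv]; omega)]
        have := hd (((n - 1 - t : ℕ) : Fin n)); omega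
      · rw [if_neg hi, zero_add]
        have := hb i; have := hd i; omega
    · have h2 := supp_smulC h
      rcases mem_add_support h2 with h3 | h3
      · exact IH (by omega) β h3
      · have h4 := supp_smulC h3
        obtain ⟨γ, hγ, hβeq⟩ := supp_X_mul h4
        obtain ⟨hb, hw⟩ := suppR d δ hd t (by omega) 1 1 γ hγ
        subst hβeq
        intro i
        rw [Finsupp.add_apply, Finsupp.single_apply]
        by_cases hi : ((n - 2 - t : ℕ) : Fin n) = i
        · rw [if_pos hi, ← hi, hw _ (by rw [hlab2v]; omega)]
          have := hd (((n - 2 - t : ℕ) : Fin n)); omega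
        · rw [if_neg hi, zero_add]
          have := hb i; have := hd i; omega

lemma stdSQ (hn : 3 ≤ n) (hd : ∀ i, 2 ≤ d i) : ∀ m, m ≤ n - 1 →
    ∀ β ∈ (SQ d δ m).support, ∀ i, β i < d i := by
  intro m
  induction m with
  | zero =>
    intro _ β hβ i
    rw [show SQ d δ 0 = X 0 from rfl] at hβ
    obtain ⟨γ, hγ, hβeq⟩ := supp_X_mul (j := 0) (q := 1) (by rwa [mul_one])
    rw [supp_one' hγ, add_zero] at hβeq
    subst hβeq
    rw [Finsupp.single_apply]
    by_cases hi : (0 : Fin n) = i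
    · rw [if_pos hi]; have := hd i; omega
    · rw [if_neg hi]; have := hd i; omega
  | succ m IH =>
    intro hm β hβ
    have hlabv : (((m + 1 : ℕ) : Fin n) : ℕ) = m + 1 := cast_val (by omega)
    rw [show SQ d δ (m + 1)
        = - C (δ ((m + 1 : ℕ) : Fin n)) * (X ((m + 1 : ℕ) : Fin n) * (W d δ m) 0 1)
        + C ((d ((m + 1 : ℕ) : Fin n)) : ℂ) * (X ((m + 2 : ℕ) : Fin n) * (W d δ m) 1 1)
        + C ((d ((m + 1 : ℕ) : Fin n)) : ℂ) * C (δ ((m + 1 : ℕ) : Fin n)) * SQ d δ m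
        from rfl] at hβ
    rcases mem_add_support hβ with h | h
    · rcases mem_add_support h with h1 | h1
      · obtain ⟨γ, hγ, hβeq⟩ := supp_X_mul (supp_negC h1)
        obtain ⟨h0, hb, hw⟩ := suppW d δ hd m (by omega) 0 1 γ hγ
        subst hβeq
        intro i
        rw [Finsupp.add_apply, Finsupp.single_apply]
        by_cases hi : ((m + 1 : ℕ) : Fin n) = i
        · rw [if_pos hi, ← hi, hw _ (by rw [hlabv]; omega)]
          have := hd (((m + 1 : ℕ) : Fin n)); omega
        · rw [if_neg hi, zero_add]
          have := hb i; have := hd i; omega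
      · obtain ⟨γ, hγ, hβeq⟩ := supp_X_mul (supp_smulC h1)
        obtain ⟨h0, hb, hw⟩ := suppW d δ hd m (by omega) 1 1 γ hγ
        subst hβeq
        intro i
        rw [Finsupp.add_apply, Finsupp.single_apply]
        have hγlab2 : γ ((m + 2 : ℕ) : Fin n) = 0 := by
          by_cases hc : m + 2 = n
          · rw [hc, cast_n_eq_zero]; exact h0
          · exact hw _ (by rw [cast_val (show m + 2 < n by omega)]; omega)
        by_cases hi : ((m + 2 : ℕ) : Fin n) = i
        · rw [if_pos hi, ← hi, hγlab2]
          have := hd (((m + 2 : ℕ) : Fin n)); omega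
        · rw [if_neg hi, zero_add]
          have := hb i; have := hd i; omega
    · have h2 := supp_smulC (by
        rwa [show (C ((d ((m + 1 : ℕ) : Fin n)) : ℂ) * C (δ ((m + 1 : ℕ) : Fin n)) * SQ d δ m
            : MvPolynomial (Fin n) ℂ)
          = C ((d ((m + 1 : ℕ) : Fin n)) * δ ((m + 1 : ℕ) : Fin n))
            * SQ d δ m by rw [C_mul]] at h)
      exact IH (by omega) β h2



noncomputable def mstar : Fin n →₀ ℕ := Finsupp.single 0 1 + tau d (n - 2)

lemma tau_at_zero (hn : 3 ≤ n) : tau d (n - 2) 0 = 0 := by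
  rw [tauval d (n - 2) (by omega) 0, if_neg]
  rw [Finset.mem_Icc, Fin.val_zero]
  omega

lemma ne01 (hn : 3 ≤ n) : (0 : Fin n) ≠ (1 : Fin n) := by
  intro h
  have := congrArg Fin.val h
  rw [Fin.val_zero, val_one3 hn] at this
  exact absurd this (by omega)

lemma mstar_at_zero (hn : 3 ≤ n) : mstar d 0 = 1 := by
  rw [mstar, Finsupp.add_apply, Finsupp.single_apply, if_pos rfl, tau_at_zero d hn]

lemma mstar_at_one (hn : 3 ≤ n) : mstar d (1 : Fin n) = d (1 : Fin n) - 1 := by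
  rw [mstar, Finsupp.add_apply, Finsupp.single_apply, if_neg (ne01 hn), zero_add,
    tauval d (n - 2) (by omega), if_pos]
  rw [val_one3 hn, Finset.mem_Icc]
  omega

lemma coeff_X0_mul_mstar (hn : 3 ≤ n) (q : MvPolynomial (Fin n) ℂ) :
    coeff (mstar d) (X 0 * q) = coeff (tau d (n - 2)) q := by
  rw [show (X 0 * q : MvPolynomial (Fin n) ℂ)
      = q * monomial (Finsupp.single 0 1) 1 by rw [← X_pow_eq_monomial, pow_one]; ring]
  rw [coeff_mul_monomial', if_pos (by
    rw [Finsupp.single_le_iff, mstar_at_zero d hn]), mul_one]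
  congr 1
  rw [mstar]
  exact add_tsub_cancel_left _ _

lemma coeff_Xlab_mul_zero (hn : 3 ≤ n) {q : MvPolynomial (Fin n) ℂ} {lab : Fin n}
    (hlab : lab ≠ 0) (hq : ∀ γ ∈ q.support, γ 0 = 0) :
    coeff (mstar d) (X lab * q) = 0 := by
  rw [← notMem_support_iff]
  intro hmem
  obtain ⟨γ, hγ, heq⟩ := supp_X_mul hmem
  have h0 : mstar d 0 = 1 := mstar_at_zero d hn
  rw [heq, Finsupp.add_apply, Finsupp.single_apply, if_neg hlab, zero_add, hq γ hγ] at h0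
  exact one_ne_zero h0.symm

lemma coeff_mstar_X0 (hn : 3 ≤ n) (hd : ∀ i, 2 ≤ d i) :
    coeff (mstar d) (X (0 : Fin n) : MvPolynomial (Fin n) ℂ) = 0 := by
  rw [show (X (0 : Fin n) : MvPolynomial (Fin n) ℂ)
    = monomial (Finsupp.single 0 1) 1 by rw [← X_pow_eq_monomial, pow_one]]
  rw [coeff_monomial, if_neg]
  intro hc
  have h1 := congrArg (fun f : Fin n →₀ ℕ => f (1 : Fin n)) hc
  rw [Finsupp.single_apply, if_neg (ne01 hn), mstar_at_one d hn] at h1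
  have := hd (1 : Fin n)
  omega

lemma cSR (hn : 3 ≤ n) (hd : ∀ i, 2 ≤ d i) : ∀ t, t ≤ n - 1 →
    coeff (mstar d) (SR d δ t) = 0 := by
  intro t
  induction t with
  | zero =>
    intro _
    rw [show SR d δ 0 = X 0 from rfl]
    exact coeff_mstar_X0 d hn hd
  | succ t IH =>
    intro ht
    rw [show SR d δ (t + 1) = X ((n - 1 - t : ℕ) : Fin n) * (R d δ t) 1 0
        + C ((d ((n - 1 - t : ℕ) : Fin n)) : ℂ) *
          (SR d δ t + C (δ ((n - 1 - t : ℕ) : Fin n)) *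
            (X ((n - 2 - t : ℕ) : Fin n) * (R d δ t) 1 1)) from rfl]
    rw [coeff_add, coeff_C_mul, coeff_add, coeff_C_mul]
    have hz1 : coeff (mstar d) (X ((n - 1 - t : ℕ) : Fin n) * (R d δ t) 1 0) = 0 := by
      apply coeff_Xlab_mul_zero d hn
      · intro hc
        have := congrArg Fin.val hc
        rw [cast_val (show n - 1 - t < n by omega), Fin.val_zero] at this
        omega
      · intro γ hγ
        exact (suppR d δ hd t (by omega) 1 0 γ hγ).2 0 (by rw [Fin.val_zero]; omega)
    have hz2 : coeff (mstar d) (X ((n - 2 - t : ℕ) : Fin n) * (R d δ t) 1 1) = 0 := by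
      by_cases hcase : t = n - 2
      · subst hcase
        rw [show (n - 2 - (n - 2) : ℕ) = 0 by omega, Nat.cast_zero]
        rw [coeff_X0_mul_mstar d hn]
        rw [← notMem_support_iff]
        intro hmem
        have h1 := (suppR d δ hd (n - 2) (by omega) 1 1 _ hmem).2 (1 : Fin n)
          (by rw [val_one3 hn]; omega)
        rw [tauval d (n - 2) (by omega), if_pos (by rw [val_one3 hn, Finset.mem_Icc]; omega)]
          at h1
        have := hd (1 : Fin n)
        omega
      · apply coeff_Xlab_mul_zero d hn
        · intro hc
          have := congrArg Fin.val hc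
          rw [cast_val (show n - 2 - t < n by omega), Fin.val_zero] at this
          omega
        · intro γ hγ
          exact (suppR d δ hd t (by omega) 1 1 γ hγ).2 0 (by rw [Fin.val_zero]; omega)
    rw [hz1, hz2, IH (by omega)]
    ring

lemma cSQ (hn : 3 ≤ n) (hd : ∀ i, 2 ≤ d i) : ∀ m, m ≤ n - 2 →
    coeff (mstar d) (SQ d δ m) = 0 := by
  intro m
  induction m with
  | zero =>
    intro _
    rw [show SQ d δ 0 = X 0 from rfl]
    exact coeff_mstar_X0 d hn hd
  | succ m IH =>
    intro hm
    rw [show SQ d δ (m + 1)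
        = - C (δ ((m + 1 : ℕ) : Fin n)) * (X ((m + 1 : ℕ) : Fin n) * (W d δ m) 0 1)
        + C ((d ((m + 1 : ℕ) : Fin n)) : ℂ) * (X ((m + 2 : ℕ) : Fin n) * (W d δ m) 1 1)
        + C ((d ((m + 1 : ℕ) : Fin n)) : ℂ) * C (δ ((m + 1 : ℕ) : Fin n)) * SQ d δ m
        from rfl]
    rw [coeff_add, coeff_add]
    rw [show (- C (δ ((m + 1 : ℕ) : Fin n)) * (X ((m + 1 : ℕ) : Fin n) * (W d δ m) 0 1)
        : MvPolynomial (Fin n) ℂ)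
      = C (- δ ((m + 1 : ℕ) : Fin n)) * (X ((m + 1 : ℕ) : Fin n) * (W d δ m) 0 1)
        by rw [map_neg]]
    rw [coeff_C_mul, coeff_C_mul, mul_assoc, coeff_C_mul, coeff_C_mul]
    have hz1 : coeff (mstar d) (X ((m + 1 : ℕ) : Fin n) * (W d δ m) 0 1) = 0 := by
      apply coeff_Xlab_mul_zero d hn
      · intro hc
        have := congrArg Fin.val hc
        rw [cast_val (show m + 1 < n by omega), Fin.val_zero] at this
        omega
      · intro γ hγ
        exact (suppW d δ hd m (by omega) 0 1 γ hγ).1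
    have hz2 : coeff (mstar d) (X ((m + 2 : ℕ) : Fin n) * (W d δ m) 1 1) = 0 := by
      apply coeff_Xlab_mul_zero d hn
      · intro hc
        have := congrArg Fin.val hc
        rw [cast_val (show m + 2 < n by omega), Fin.val_zero] at this
        omega
      · intro γ hγ
        exact (suppW d δ hd m (by omega) 1 1 γ hγ).1
    rw [hz1, hz2, IH (by omega)]
    ring

lemma coeffSQtop (hn : 3 ≤ n) (hd : ∀ i, 2 ≤ d i) :
    coeff (mstar d) (SQ d δ (n - 1))
      = ((d (((n - 1 : ℕ)) : Fin n)) : ℂ)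
        * ∏ j ∈ Finset.Icc 1 (n - 2), ((d ((j : ℕ) : Fin n)) : ℂ) := by
  have hunf : SQ d δ (n - 1)
      = - C (δ ((n - 1 : ℕ) : Fin n)) * (X ((n - 1 : ℕ) : Fin n) * (W d δ (n - 2)) 0 1)
      + C ((d ((n - 1 : ℕ) : Fin n)) : ℂ) * (X ((n : ℕ) : Fin n) * (W d δ (n - 2)) 1 1)
      + C ((d ((n - 1 : ℕ) : Fin n)) : ℂ) * C (δ ((n - 1 : ℕ) : Fin n)) * SQ d δ (n - 2) := by
    conv_lhs => rw [show n - 1 = (n - 2) + 1 by omega]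
    rw [show SQ d δ ((n - 2) + 1)
        = - C (δ ((n - 2 + 1 : ℕ) : Fin n)) * (X ((n - 2 + 1 : ℕ) : Fin n) * (W d δ (n - 2)) 0 1)
        + C ((d ((n - 2 + 1 : ℕ) : Fin n)) : ℂ) * (X ((n - 2 + 2 : ℕ) : Fin n) * (W d δ (n - 2)) 1 1)
        + C ((d ((n - 2 + 1 : ℕ) : Fin n)) : ℂ) * C (δ ((n - 2 + 1 : ℕ) : Fin n)) * SQ d δ (n - 2)
        from rfl]
    rw [show (n - 2 + 1 : ℕ) = n - 1 by omega, show (n - 2 + 2 : ℕ) = n by omega]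
  rw [hunf, coeff_add, coeff_add]
  rw [show (- C (δ ((n - 1 : ℕ) : Fin n)) * (X ((n - 1 : ℕ) : Fin n) * (W d δ (n - 2)) 0 1)
      : MvPolynomial (Fin n) ℂ)
    = C (- δ ((n - 1 : ℕ) : Fin n)) * (X ((n - 1 : ℕ) : Fin n) * (W d δ (n - 2)) 0 1)
      by rw [map_neg]]
  rw [coeff_C_mul, coeff_C_mul, mul_assoc, coeff_C_mul, coeff_C_mul]
  have hz1 : coeff (mstar d) (X ((n - 1 : ℕ) : Fin n) * (W d δ (n - 2)) 0 1) = 0 := by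
    apply coeff_Xlab_mul_zero d hn
    · intro hc
      have := congrArg Fin.val hc
      rw [cast_val (show n - 1 < n by omega), Fin.val_zero] at this
      omega
    · intro γ hγ
      exact (suppW d δ hd (n - 2) (by omega) 0 1 γ hγ).1
  have hz2 : coeff (mstar d) (X ((n : ℕ) : Fin n) * (W d δ (n - 2)) 1 1)
      = ∏ j ∈ Finset.Icc 1 (n - 2), ((d ((j : ℕ) : Fin n)) : ℂ) := by
    rw [cast_n_eq_zero, coeff_X0_mul_mstar d hn]
    exact topW d δ hd (n - 2) le_rfl
  rw [hz1, hz2, cSQ d δ hn hd (n - 2) le_rfl]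
  ring

noncomputable def Sfull : MvPolynomial (Fin n) ℂ :=
  - C (δ 0) * (X 0 * (R d δ (n - 1)) 0 1) + X 0 * (R d δ (n - 1)) 1 0
  + C ((d 0) : ℂ) * SR d δ (n - 1) + C ((d 0) : ℂ) * C (δ 0) * SQ d δ (n - 1)

lemma W01_top (hn : 3 ≤ n) : (W d δ (n - 1)) 0 1 = (W d δ (n - 2)) 1 1 := by
  have h : W d δ (n - 1) = L d δ ((n - 1 : ℕ) : Fin n) * W d δ (n - 2) := by
    conv_lhs => rw [show n - 1 = (n - 2) + 1 by omega]
    rw [show W d δ ((n - 2) + 1) = L d δ ((n - 2 + 1 : ℕ) : Fin n) * W d δ (n - 2) from rfl]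
    rw [show (n - 2 + 1 : ℕ) = n - 1 by omega]
  rw [h, mul_apply2, L00, L01, zero_mul, one_mul, zero_add]

lemma coeffSfull (hn : 3 ≤ n) (hd : ∀ i, 2 ≤ d i) :
    coeff (mstar d) (Sfull d δ)
      = δ 0 * ((d 0 : ℂ) * (d (((n - 1 : ℕ)) : Fin n) : ℂ) - 1)
        * ∏ j ∈ Finset.Icc 1 (n - 2), ((d ((j : ℕ) : Fin n)) : ℂ) := by
  rw [Sfull, coeff_add, coeff_add, coeff_add]
  rw [show (- C (δ 0) * (X 0 * (R d δ (n - 1)) 0 1) : MvPolynomial (Fin n) ℂ)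
    = C (- δ 0) * (X 0 * (R d δ (n - 1)) 0 1) by rw [map_neg]]
  rw [coeff_C_mul, coeff_C_mul, mul_assoc, coeff_C_mul, coeff_C_mul]
  have h1 : coeff (mstar d) (X 0 * (R d δ (n - 1)) 0 1)
      = ∏ j ∈ Finset.Icc 1 (n - 2), ((d ((j : ℕ) : Fin n)) : ℂ) := by
    rw [coeff_X0_mul_mstar d hn, R_eq_W, W01_top d δ hn]
    exact topW d δ hd (n - 2) le_rfl
  have h2 : coeff (mstar d) (X 0 * (R d δ (n - 1)) 1 0) = 0 := by
    rw [coeff_X0_mul_mstar d hn, ← notMem_support_iff]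
    intro hmem
    rw [R_eq_W] at hmem
    have hcol := col0W d δ hn (n - 1) le_rfl 1 _ hmem
    rw [tauval d (n - 2) (by omega), if_pos (by rw [val_one3 hn, Finset.mem_Icc]; omega)]
      at hcol
    have := hd (1 : Fin n)
    omega
  rw [h1, h2, cSR d δ hn hd (n - 1) le_rfl, coeffSQtop d δ hn hd]
  ring

lemma stdSfull (hn : 3 ≤ n) (hd : ∀ i, 2 ≤ d i) :
    ∀ β ∈ (Sfull d δ).support, ∀ i, β i < d i := by
  intro β hβ
  rw [Sfull] at hβ
  rcases mem_add_support hβ with h | h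
  · rcases mem_add_support h with h1 | h1
    · rcases mem_add_support h1 with h2 | h2
      · obtain ⟨γ, hγ, hβeq⟩ := supp_X_mul (supp_negC h2)
        obtain ⟨hb, hw⟩ := suppR d δ hd (n - 1) le_rfl 0 1 γ hγ
        subst hβeq
        intro i
        rw [Finsupp.add_apply, Finsupp.single_apply]
        by_cases hi : (0 : Fin n) = i
        · rw [if_pos hi, ← hi, hw 0 (by rw [Fin.val_zero]; omega)]
          have := hd (0 : Fin n); omega
        · rw [if_neg hi, zero_add]
          have := hb i; have := hd i; omega
      · obtain ⟨γ, hγ, hβeq⟩ := supp_X_mul h2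
        obtain ⟨hb, hw⟩ := suppR d δ hd (n - 1) le_rfl 1 0 γ hγ
        subst hβeq
        intro i
        rw [Finsupp.add_apply, Finsupp.single_apply]
        by_cases hi : (0 : Fin n) = i
        · rw [if_pos hi, ← hi, hw 0 (by rw [Fin.val_zero]; omega)]
          have := hd (0 : Fin n); omega
        · rw [if_neg hi, zero_add]
          have := hb i; have := hd i; omega
    · exact stdSR d δ hd (n - 1) le_rfl β (supp_smulC h1)
  · have h2 := supp_smulC (by
      rwa [show (C ((d 0 : ℕ) : ℂ) * C (δ 0) * SQ d δ (n - 1) : MvPolynomial (Fin n) ℂ)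
        = C (((d 0 : ℕ) : ℂ) * δ 0) * SQ d δ (n - 1) by rw [C_mul]] at h)
    exact stdSQ d δ hn hd (n - 1) le_rfl β h2

lemma S_span (hn : 3 ≤ n) (hd : ∀ i, 2 ≤ d i)
    (φ : Fin n → MvPolynomial (Fin n) ℂ)
    (hφ : ∀ i, φ i = X i ^ d i - X (i + 1) - C (δ i) * X (i - 1)) :
    X 0 * Matrix.trace (R d δ n) - Sfull d δ ∈ Ideal.span (Set.range φ) := by
  have hRn : R d δ n = R d δ (n - 1) * L d δ 0 := by
    have hlen : 0 < (List.ofFn (L d δ)).length := by rw [List.length_ofFn]; omega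
    have h0 : (List.ofFn (L d δ)) = (List.ofFn (L d δ))[0] :: (List.ofFn (L d δ)).drop 1 := by
      conv_lhs => rw [← List.drop_zero (l := List.ofFn (L d δ))]
      exact List.drop_eq_getElem_cons hlen
    have h2 := list_prod_eq d δ (n - 1) (by omega)
    rw [show n - (n - 1) = 1 by omega] at h2
    rw [← M_eq_R]
    conv_lhs => rw [h0]
    rw [List.reverse_cons, List.prod_append, List.prod_singleton, h2]
    congr 1
    rw [List.getElem_ofFn]
    exact congrArg (L d δ) (Fin.ext (by simp))
  have e0 : (0 : Fin n) - 1 = ((n - 1 : ℕ) : Fin n) := by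
    have h : ((n - 1 : ℕ) : Fin n) + 1 = 0 := by
      rw [cast_add_one, show (n - 1 + 1 : ℕ) = n by omega, cast_n_eq_zero]
    rw [← h]; exact add_sub_cancel_right _ _
  have hφ0 : φ 0 = X (0 : Fin n) * X (0 : Fin n) ^ (d 0 - 1)
      - X (1 : Fin n) - C (δ 0) * X ((n - 1 : ℕ) : Fin n) := by
    rw [hφ 0, zero_add, e0]
    rw [show X (0 : Fin n) ^ (d 0) = X (0 : Fin n) * X (0 : Fin n) ^ (d 0 - 1) by
      rw [← pow_succ']
      congr 1
      have := hd 0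
      omega]
  have c1 := chainR d δ hd φ hφ (n - 1) le_rfl
  rw [show (n - (n - 1) : ℕ) = 1 by omega, Nat.cast_one] at c1
  have c2 := chainQ d δ hd φ hφ (n - 1) le_rfl
  rw [← R_eq_W] at c2
  have hent : ∀ i k : Fin 2, (R d δ n) i k = (R d δ (n - 1) * L d δ 0) i k := by
    intro i k
    exact congrFun (congrFun hRn i) k
  have hkey : X 0 * Matrix.trace (R d δ n) - Sfull d δ
      = (C ((d 0 : ℕ) : ℂ) * (R d δ (n - 1)) 1 1) * φ 0
        + C ((d 0 : ℕ) : ℂ) * (X (1 : Fin n) * (R d δ (n - 1)) 1 1 - SR d δ (n - 1))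
        + C ((d 0 : ℕ) : ℂ) * C (δ 0)
          * (X ((n - 1 : ℕ) : Fin n) * (R d δ (n - 1)) 1 1 - SQ d δ (n - 1)) := by
    rw [Matrix.trace_fin_two, hent 0 0, hent 1 1, mul_apply2, mul_apply2, L00, L01, L10, L11,
      hφ0, Sfull]
    ring
  rw [hkey]
  exact Ideal.add_mem _
    (Ideal.add_mem _
      (Ideal.mul_mem_left _ _ (Ideal.subset_span ⟨_, rfl⟩))
      (Ideal.mul_mem_left _ _ c1))
    (Ideal.mul_mem_left _ _ c2)



end Stmt9M

open Stmt9Aux Stmt9M in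
/-- Lemma 5.3, pure-power case: for `n ≥ 3` and `pⱼ(y) = y^{dⱼ}`,
`y₁ Φ ∉ ⟨φ₁, …, φₙ⟩` where `Φ = λ² - λ Tr(Mₙ) + δ`. -/
theorem stmt9 (n : ℕ) [NeZero n] (hn : 3 ≤ n) (d : Fin n → ℕ) (hd : ∀ i, 2 ≤ d i)
    (δ : Fin n → ℂ) (hδ : ∀ i, δ i ≠ 0)
    (lam : ℂ) (hlam : lam ≠ 0)
    (φ : Fin n → MvPolynomial (Fin n) ℂ)
    (hφ : ∀ i, φ i = X i ^ d i - X (i + 1) - C (δ i) * X (i - 1))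
    (M : Matrix (Fin 2) (Fin 2) (MvPolynomial (Fin n) ℂ))
    (hM : M = ((List.ofFn fun j : Fin n =>
        (!![0, 1; -C (δ j), C (d j : ℂ) * X j ^ (d j - 1)] :
          Matrix (Fin 2) (Fin 2) (MvPolynomial (Fin n) ℂ))).reverse).prod)
    (Φ : MvPolynomial (Fin n) ℂ)
    (hΦ : Φ = C (lam ^ 2) - C lam * Matrix.trace M + C (∏ i, δ i)) :
    X 0 * Φ ∉ Ideal.span (Set.range φ) := by
  intro hmem
  have hMR : M = Stmt9M.R d δ n := by rw [hM]; exact (Stmt9M.M_eq_R d δ)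
  set S := Stmt9M.Sfull d δ with hSdef
  set s : MvPolynomial (Fin n) ℂ :=
    C (lam ^ 2) * X 0 + C (∏ i, δ i) * X 0 - C lam * S with hs
  have hspan : X 0 * Φ - s ∈ Ideal.span (Set.range φ) := by
    have h1 := Stmt9M.S_span d δ hn hd φ hφ
    rw [← hMR] at h1
    have h2 : X 0 * Φ - s = (- C lam) * (X 0 * Matrix.trace M - S) := by
      rw [hΦ, hs]; ring
    rw [h2]
    exact Ideal.mul_mem_left _ _ h1
  have hsmem : s ∈ Ideal.span (Set.range φ) := by
    have h3 := Ideal.sub_mem _ hmem hspan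
    rwa [sub_sub_cancel] at h3
  have hstd : ∀ β ∈ s.support, ∀ i, β i < d i := by
    have hXstd : ∀ i : Fin n, (Finsupp.single (0 : Fin n) 1) i < d i := by
      intro i
      rw [Finsupp.single_apply]
      by_cases h0 : (0 : Fin n) = i
      · rw [if_pos h0]; have := hd i; omega
      · rw [if_neg h0]; have := hd i; omega
    intro β hβ
    rw [hs, sub_eq_add_neg] at hβ
    rcases Stmt9M.mem_add_support hβ with h | h
    · rcases Stmt9M.mem_add_support h with h1 | h1
      · have h2 := Stmt9M.supp_smulC h1
        rw [support_X, Finset.mem_singleton] at h2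
        subst h2
        exact hXstd
      · have h2 := Stmt9M.supp_smulC h1
        rw [support_X, Finset.mem_singleton] at h2
        subst h2
        exact hXstd
    · rw [support_neg] at h
      exact Stmt9M.stdSfull d δ hn hd β (Stmt9M.supp_smulC h)
  obtain ⟨g, hg⟩ := Ideal.mem_span_range_iff_exists_fun.mp hsmem
  have hzero := Stmt9Aux.crux d hd δ φ hφ
      (Finset.univ.sup fun i => (g i).totalDegree + d i) g
      (fun i _ => Finset.le_sup (f := fun i => (g i).totalDegree + d i) (Finset.mem_univ i)) (by rw [hg]; exact hstd)
  rw [hg] at hzero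
  have hc := congrArg (coeff (Stmt9M.mstar d)) hzero
  rw [coeff_zero, hs] at hc
  rw [sub_eq_add_neg, coeff_add, coeff_add, coeff_C_mul, coeff_C_mul,
    Stmt9M.coeff_mstar_X0 d hn hd, coeff_neg, coeff_C_mul, hSdef,
    Stmt9M.coeffSfull d δ hn hd] at hc
  have hprod : ∏ j ∈ Finset.Icc 1 (n - 2), ((d ((j : ℕ) : Fin n)) : ℂ) ≠ 0 := by
    apply Finset.prod_ne_zero_iff.mpr
    intro j _
    exact Nat.cast_ne_zero.mpr (by have := hd ((j : ℕ) : Fin n); omega)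
  have hdd : (d 0 : ℂ) * ((d (((n - 1 : ℕ)) : Fin n)) : ℂ) - 1 ≠ 0 := by
    rw [sub_ne_zero]
    intro hcontr
    have h4 : ((d 0 * d (((n - 1 : ℕ)) : Fin n) : ℕ) : ℂ) = ((1 : ℕ) : ℂ) := by
      push_cast
      rw [hcontr]
    have h5 := Nat.cast_injective (R := ℂ) h4
    have := hd 0
    have := hd (((n - 1 : ℕ)) : Fin n)
    nlinarith
  apply hlam
  have h6 : lam * (δ 0 * ((d 0 : ℂ) * ((d (((n - 1 : ℕ)) : Fin n)) : ℂ) - 1)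
      * ∏ j ∈ Finset.Icc 1 (n - 2), ((d ((j : ℕ) : Fin n)) : ℂ)) = 0 := by
    linear_combination -hc
  rcases mul_eq_zero.mp h6 with h | h
  · exact h
  · exfalso
    rcases mul_eq_zero.mp h with h7 | h7
    · rcases mul_eq_zero.mp h7 with h8 | h8
      · exact hδ 0 h8
      · exact hdd h8
    · exact hprod h7

end ALL
end

section
/- Let $\Phi = \lambda^2 - \lambda(m_{11}^{(n)} + m_{22}^{(n)}) + \delta_1\cdots\delta_n \in \mathbb{C}[y_1,\dots,y_n]$ where $m^{(n)}_{ij}$ are the entries of $M_n = \prod_{j=n}^1 \begin{pmatrix}0&1\\-\delta_j&p'_j(y_j)\end{pmatrix}$, with $p_j$ monic of degree $d_j \ge 2$ and $\lambda \ne 0$. Then the leading monomial of $\Phi$ in the graded lexicographic order is $y_1^{d_1-1} y_2^{d_2-1} \cdots y_n^{d_n-1}$, with leading coefficient $-\lambda \, d_1 d_2 \cdots d_n$. -/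
open MvPolynomial Matrix Polynomial

lemma dsum_mul_le {n : ℕ} {φ ψ : MvPolynomial (Fin n) ℂ} {c₁ c₂ a b : ℕ}
    (hφ : ∀ ν ∈ φ.support, (∑ i, ν i) + c₁ ≤ a)
    (hψ : ∀ ν ∈ ψ.support, (∑ i, ν i) + c₂ ≤ b) :
    ∀ ν ∈ (φ * ψ).support, (∑ i, ν i) + (c₁ + c₂) ≤ a + b := by
  intro ν hν
  obtain ⟨x, hx, y, hy, rfl⟩ := Finset.mem_add.1 (MvPolynomial.support_mul φ ψ hν)
  have : (∑ i, (x + y) i) = (∑ i, x i) + ∑ i, y i := by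
    simp [Finsupp.add_apply, Finset.sum_add_distrib]
  rw [this]
  have := hφ x hx; have := hψ y hy; omega

lemma coeff_mul_top {n : ℕ} {φ ψ : MvPolynomial (Fin n) ℂ} {α β : Fin n →₀ ℕ}
    (hφ : ∀ ν ∈ φ.support, ν ≤ α) (hψ : ∀ ν ∈ ψ.support, ν ≤ β) :
    MvPolynomial.coeff (α + β) (φ * ψ) = MvPolynomial.coeff α φ * MvPolynomial.coeff β ψ := by
  rw [MvPolynomial.coeff_mul]
  rw [Finset.sum_eq_single (α, β)]
  · intro q hq hne
    rcases Finset.HasAntidiagonal.mem_antidiagonal.1 hq with h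
    by_contra hc
    have hx : q.1 ∈ φ.support := by
      simp only [MvPolynomial.mem_support_iff]; intro h0; apply hc; simp [h0]
    have hy : q.2 ∈ ψ.support := by
      simp only [MvPolynomial.mem_support_iff]; intro h0; apply hc; simp [h0]
    have h1 := hφ _ hx
    have h2 := hψ _ hy
    apply hne
    have hq1 : q.1 = α := by
      ext i
      have e1 : q.1 i + q.2 i = α i + β i := by
        have := congrArg (fun z => z i) h; simpa using this
      have := h1 i; have := h2 i; omega
    have hq2 : q.2 = β := by
      ext i
      have e1 : q.1 i + q.2 i = α i + β i := by
        have := congrArg (fun z => z i) h; simpa using this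
      have := h1 i; have := h2 i; omega
    exact Prod.ext hq1 hq2
  · intro h; simp at h


lemma aevalX_eq {n : ℕ} (j : Fin n) (g : Polynomial ℂ) :
    Polynomial.aeval (X j : MvPolynomial (Fin n) ℂ) g =
      ∑ e ∈ g.support, MvPolynomial.C (g.coeff e) * (X j : MvPolynomial (Fin n) ℂ) ^ e := by
  rw [Polynomial.aeval_def, Polynomial.eval₂_eq_sum, Polynomial.sum_def]; rfl

lemma aevalX_coeff {n : ℕ} (j : Fin n) (g : Polynomial ℂ) (m : ℕ) :
    MvPolynomial.coeff (Finsupp.single j m) (Polynomial.aeval (X j : MvPolynomial (Fin n) ℂ) g)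
      = g.coeff m := by
  classical
  rw [aevalX_eq, MvPolynomial.coeff_sum]
  simp only [MvPolynomial.coeff_C_mul, MvPolynomial.coeff_X_pow]
  rw [Finset.sum_eq_single m]
  · simp
  · intro e he hne
    rw [if_neg, mul_zero]
    intro h
    exact hne (by simpa using congrArg (fun z => z j) h)
  · intro h; simp [Polynomial.notMem_support_iff.1 h]

lemma aevalX_support {n : ℕ} (j : Fin n) (g : Polynomial ℂ) :
    ∀ ν ∈ (Polynomial.aeval (X j : MvPolynomial (Fin n) ℂ) g).support,
      ν ≤ Finsupp.single j g.natDegree := by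
  classical
  intro ν hν
  rw [MvPolynomial.mem_support_iff, aevalX_eq, MvPolynomial.coeff_sum] at hν
  simp only [MvPolynomial.coeff_C_mul, MvPolynomial.coeff_X_pow] at hν
  obtain ⟨e, he, hne⟩ := Finset.exists_ne_zero_of_sum_ne_zero hν
  have : Finsupp.single j e = ν := by
    by_contra h; rw [if_neg h, mul_zero] at hne; exact hne rfl
  subst this
  exact Finsupp.single_le_single.2 (Polynomial.le_natDegree_of_mem_supp e he)


lemma prod_top {n : ℕ} (d : Fin n → ℕ) (f : Fin n → MvPolynomial (Fin n) ℂ)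
    (hsupp : ∀ j, ∀ ν ∈ (f j).support, ν ≤ Finsupp.single j (d j - 1))
    (hcoeff : ∀ j, MvPolynomial.coeff (Finsupp.single j (d j - 1)) (f j) = (d j : ℂ))
    (S : Finset (Fin n)) :
    (∀ ν ∈ (∏ j ∈ S, f j).support, ν ≤ ∑ j ∈ S, Finsupp.single j (d j - 1)) ∧
      MvPolynomial.coeff (∑ j ∈ S, Finsupp.single j (d j - 1)) (∏ j ∈ S, f j)
        = ∏ j ∈ S, (d j : ℂ) := by
  classical
  induction S using Finset.induction_on with
  | empty =>
    constructor
    · intro ν hν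
      simp only [Finset.prod_empty] at hν
      have : ν = 0 := by
        by_contra h
        rw [MvPolynomial.mem_support_iff, MvPolynomial.coeff_one, if_neg (Ne.symm h)] at hν
        exact hν rfl
      simp [this]
    · simp
  | @insert a S ha ih =>
    rw [Finset.prod_insert ha, Finset.sum_insert ha, Finset.prod_insert ha]
    constructor
    · intro ν hν
      obtain ⟨x, hx, y, hy, rfl⟩ := Finset.mem_add.1 (MvPolynomial.support_mul _ _ hν)
      exact add_le_add (hsupp a x hx) (ih.1 y hy)
    · rw [coeff_mul_top (hsupp a) ih.1, hcoeff a, ih.2]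


lemma dsum_add_le {n : ℕ} {φ ψ : MvPolynomial (Fin n) ℂ} {c m : ℕ}
    (hφ : ∀ ν ∈ φ.support, (∑ i, ν i) + c ≤ m)
    (hψ : ∀ ν ∈ ψ.support, (∑ i, ν i) + c ≤ m) :
    ∀ ν ∈ (φ + ψ).support, (∑ i, ν i) + c ≤ m := by
  intro ν hν
  rcases Finset.mem_union.1 (MvPolynomial.support_add hν) with h | h
  exacts [hφ ν h, hψ ν h]

lemma dsum_C_le {n : ℕ} (c : ℂ) {k : ℕ} :
    ∀ ν ∈ (MvPolynomial.C c : MvPolynomial (Fin n) ℂ).support, (∑ i, ν i) + 0 ≤ k := by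
  intro ν hν
  have hz : ν = 0 := by
    by_contra h
    rw [MvPolynomial.mem_support_iff, MvPolynomial.coeff_C, if_neg (Ne.symm h)] at hν
    exact hν rfl
  subst hz; simp

lemma trace_structure {n : ℕ} (hn : 0 < n) (d : Fin n → ℕ) (hd : ∀ i, 2 ≤ d i)
    (δ : Fin n → ℂ) (f : Fin n → MvPolynomial (Fin n) ℂ)
    (hfsupp : ∀ j, ∀ ν ∈ (f j).support, (∑ i, ν i) ≤ d j - 1) :
    ∃ e : MvPolynomial (Fin n) ℂ,
      (((List.ofFn fun j : Fin n =>
          (!![0, 1; -MvPolynomial.C (δ j), f j] :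
            Matrix (Fin 2) (Fin 2) (MvPolynomial (Fin n) ℂ))).reverse).prod 0 0 +
       ((List.ofFn fun j : Fin n =>
          (!![0, 1; -MvPolynomial.C (δ j), f j] :
            Matrix (Fin 2) (Fin 2) (MvPolynomial (Fin n) ℂ))).reverse).prod 1 1)
        = (∏ j, f j) + e ∧
      ∀ ν ∈ e.support, (∑ i, ν i) + 1 ≤ ∑ i, (d i - 1) := by
  classical
  set A : Fin n → Matrix (Fin 2) (Fin 2) (MvPolynomial (Fin n) ℂ) :=
    fun j => !![0, 1; -MvPolynomial.C (δ j), f j] with hA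
  set P : ℕ → Matrix (Fin 2) (Fin 2) (MvPolynomial (Fin n) ℂ) :=
    fun k => (((List.ofFn A).take k).reverse).prod with hP
  -- step lemma
  have hstep : ∀ k (hk : k < n), P (k + 1) = A ⟨k, hk⟩ * P k := by
    intro k hk
    show (((List.ofFn A).take (k+1)).reverse).prod = _
    have ht : (List.take (k+1) (List.ofFn A)) = List.take k (List.ofFn A) ++ [A ⟨k, hk⟩] := by
      rw [List.take_succ]; congr 1; rw [List.getElem?_ofFn]; simp [List.ofFnNthVal, hk]
    rw [ht, List.reverse_append]
    simp [List.prod_cons]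
    rfl
  have g' : ℕ → ℕ := fun i => 0
  set gg : ℕ → ℕ := fun i => if h : i < n then d ⟨i, h⟩ - 1 else 0 with hgg
  set ff : ℕ → MvPolynomial (Fin n) ℂ := fun i => if h : i < n then f ⟨i, h⟩ else 1 with hff
  set D : ℕ → ℕ := fun k => ∑ i ∈ Finset.range k, gg i with hD
  set F : ℕ → MvPolynomial (Fin n) ℂ := fun k => ∏ i ∈ Finset.range k, ff i with hF
  have hgg1 : ∀ i, i < n → 1 ≤ gg i := by
    intro i hi; simp only [hgg, dif_pos hi]; have := hd ⟨i, hi⟩; omega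
  have hDmono : ∀ a b, a ≤ b → D a ≤ D b := by
    intro a b hab
    exact Finset.sum_le_sum_of_subset (Finset.range_subset_range.2 hab)
  have hDsucc : ∀ k, D (k + 1) = D k + gg k := fun k => Finset.sum_range_succ _ _
  have hFsucc : ∀ k, F (k + 1) = F k * ff k := fun k => Finset.prod_range_succ _ _
  have hDn : D n = ∑ i, (d i - 1) := by
    have h0 : D n = ∑ i ∈ Finset.range n, gg i := rfl
    rw [h0, ← Fin.sum_univ_eq_sum_range]
    apply Finset.sum_congr rfl
    intro i _
    simp [hgg, i.isLt]
  have hFn : F n = ∏ i, f i := by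
    have h0 : F n = ∏ i ∈ Finset.range n, ff i := rfl
    rw [h0, ← Fin.prod_univ_eq_prod_range]
    apply Finset.prod_congr rfl
    intro i _
    simp [hff, i.isLt]
  have hffsupp : ∀ k, k < n → ∀ ν ∈ (ff k).support, (∑ i, ν i) + 0 ≤ gg k := by
    intro k hk ν hν
    simp only [hff, dif_pos hk] at hν
    simp only [hgg, dif_pos hk]
    simpa using hfsupp _ ν hν
  have hFsupp : ∀ k, k ≤ n → ∀ ν ∈ (F k).support, (∑ i, ν i) + 0 ≤ D k := by
    intro k
    induction k with
    | zero =>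
      intro _ ν hν
      have : ν = 0 := by
        by_contra h
        rw [MvPolynomial.mem_support_iff] at hν
        apply hν
        show MvPolynomial.coeff ν (F 0) = 0
        simp only [hF, Finset.range_zero, Finset.prod_empty]
        rw [MvPolynomial.coeff_one, if_neg (Ne.symm h)]
      simp [this]
    | succ k ih =>
      intro hk
      rw [hFsucc k]
      have h1 := dsum_mul_le (ih (by omega)) (hffsupp k (by omega))
      intro ν hν
      have := h1 ν hν
      have := hDsucc k
      omega
  -- entry lemmas for A
  have hA00 : ∀ j, A j 0 0 = 0 := by intro j; simp [hA]
  have hA01 : ∀ j, A j 0 1 = 1 := by intro j; simp [hA]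
  have hA10 : ∀ j, A j 1 0 = -MvPolynomial.C (δ j) := by intro j; simp [hA]
  have hA11 : ∀ j, A j 1 1 = f j := by intro j; simp [hA]
  have hmul : ∀ (j : Fin n) (Q : Matrix (Fin 2) (Fin 2) (MvPolynomial (Fin n) ℂ)),
      (A j * Q) 0 0 = Q 1 0 ∧ (A j * Q) 0 1 = Q 1 1 ∧
      (A j * Q) 1 0 = -MvPolynomial.C (δ j) * Q 0 0 + f j * Q 1 0 ∧
      (A j * Q) 1 1 = -MvPolynomial.C (δ j) * Q 0 1 + f j * Q 1 1 := by
    intro j Q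
    refine ⟨?_, ?_, ?_, ?_⟩ <;>
      simp [Matrix.mul_apply, Fin.sum_univ_two, hA00, hA01, hA10, hA11]
  -- main induction
  have main : ∀ k, 1 ≤ k → k ≤ n →
      ∃ r s, P k 1 1 = F k + r ∧ P k 0 1 = F (k - 1) + s ∧
        (∀ ν ∈ r.support, (∑ i, ν i) + 2 ≤ D k) ∧
        (∀ ν ∈ s.support, (∑ i, ν i) + 2 ≤ D (k - 1)) ∧
        (∀ ν ∈ (P k 1 0).support, (∑ i, ν i) + 1 ≤ D k) ∧
        (∀ ν ∈ (P k 0 0).support, (∑ i, ν i) + 1 ≤ D (k - 1)) := by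
    intro k hk1
    induction k, hk1 using Nat.le_induction with
    | base =>
      intro hn'
      have h0n : 0 < n := hn
      have hP1 : P 1 = A ⟨0, h0n⟩ * P 0 := hstep 0 h0n
      have hP0 : P 0 = 1 := by simp [hP]
      rw [hP0, mul_one] at hP1
      refine ⟨0, 0, ?_, ?_, by simp, by simp, ?_, ?_⟩
      · rw [hP1, hA11, add_zero]
        show f _ = F 1
        rw [hFsucc 0]
        show f _ = F 0 * ff 0
        have : F 0 = 1 := by simp [hF]
        rw [this, one_mul, hff]
        simp [h0n]
      · rw [hP1, hA01, add_zero]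
        show (1 : MvPolynomial (Fin n) ℂ) = F 0
        simp [hF]
      · rw [hP1, hA10]
        intro ν hν
        have hs : ν ∈ (MvPolynomial.C (δ ⟨0, h0n⟩) : MvPolynomial (Fin n) ℂ).support := by
          rw [MvPolynomial.mem_support_iff] at hν ⊢
          intro h; apply hν
          show MvPolynomial.coeff ν (-MvPolynomial.C (δ ⟨0, h0n⟩)) = 0
          rw [MvPolynomial.coeff_neg, h, neg_zero]
        have := dsum_C_le (n := n) (δ ⟨0, h0n⟩) (k := 0) ν hs
        have hD1 : 1 ≤ D 1 := by
          rw [hDsucc 0]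
          have := hgg1 0 h0n; omega
        omega
      · rw [hP1, hA00]
        intro ν hν
        simp at hν
    | succ k hk ih =>
      intro hkn
      have hklt : k < n := by omega
      have hk1n : k ≤ n := by omega
      obtain ⟨r, s, h11, h01, hr, hs, h10, h00⟩ := ih hk1n
      have hPk : P (k + 1) = A ⟨k, hklt⟩ * P k := hstep k hklt
      obtain ⟨e00, e01, e10, e11⟩ := hmul ⟨k, hklt⟩ (P k)
      rw [hPk]
      have hfk : ff k = f ⟨k, hklt⟩ := by simp [hff, hklt]
      have hgk : gg k = d ⟨k, hklt⟩ - 1 := by simp [hgg, hklt]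
      refine ⟨f ⟨k, hklt⟩ * r + (-MvPolynomial.C (δ ⟨k, hklt⟩) * F (k - 1)
          + -MvPolynomial.C (δ ⟨k, hklt⟩) * s), r, ?_, ?_, ?_, ?_, ?_, ?_⟩
      · rw [e11, h01, h11, hFsucc k, hfk]
        ring
      · rw [e01, h11]
        simp
      · -- remainder bound for new r
        have hb1 : ∀ ν ∈ (f ⟨k, hklt⟩ * r).support, (∑ i, ν i) + 2 ≤ D (k + 1) := by
          have hf' : ∀ ν ∈ (f ⟨k, hklt⟩).support, (∑ i, ν i) + 0 ≤ gg k := by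
            have h := hffsupp k hklt
            rwa [hfk] at h
          have := dsum_mul_le hf' hr
          intro ν hν
          have := this ν hν
          have := hDsucc k
          omega
        have hCneg : ∀ c : ℂ, ∀ m : ℕ,
            ∀ ν ∈ (-MvPolynomial.C c : MvPolynomial (Fin n) ℂ).support, (∑ i, ν i) + 0 ≤ m := by
          intro c m ν hν
          have : ν ∈ (MvPolynomial.C c : MvPolynomial (Fin n) ℂ).support := by
            rw [MvPolynomial.mem_support_iff] at hν ⊢
            intro h; apply hν
            show MvPolynomial.coeff ν (-MvPolynomial.C c) = 0
            rw [MvPolynomial.coeff_neg, h, neg_zero]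
          exact dsum_C_le c ν this
        have hb2 : ∀ ν ∈ (-MvPolynomial.C (δ ⟨k, hklt⟩) * F (k - 1)).support,
            (∑ i, ν i) + 2 ≤ D (k + 1) := by
          have := dsum_mul_le (hCneg (δ ⟨k, hklt⟩) 0) (hFsupp (k - 1) (by omega))
          intro ν hν
          have h1 := this ν hν
          -- D (k-1) + 2 ≤ D (k+1)
          have h2 : D (k - 1) + 2 ≤ D (k + 1) := by
            have e1 : D k = D (k - 1) + gg (k - 1) := by
              have hkk : k = (k - 1) + 1 := by omega
              conv_lhs => rw [hkk]
              exact hDsucc (k - 1)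
            have := hgg1 (k - 1) (by omega)
            have := hgg1 k hklt
            have := hDsucc k
            omega
          omega
        have hb3 : ∀ ν ∈ (-MvPolynomial.C (δ ⟨k, hklt⟩) * s).support,
            (∑ i, ν i) + 2 ≤ D (k + 1) := by
          have := dsum_mul_le (hCneg (δ ⟨k, hklt⟩) 0) hs
          intro ν hν
          have h1 := this ν hν
          have h2 : D (k - 1) ≤ D (k + 1) := hDmono _ _ (by omega)
          omega
        exact dsum_add_le hb1 (dsum_add_le hb2 hb3)
      · -- new s bound : r with D k
        intro ν hν
        have := hr ν hν
        simpa using this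
      · -- new (1,0) bound
        rw [e10]
        have hCneg : ∀ ν ∈ (-MvPolynomial.C (δ ⟨k, hklt⟩) : MvPolynomial (Fin n) ℂ).support,
            (∑ i, ν i) + 0 ≤ 0 := by
          intro ν hν
          have : ν ∈ (MvPolynomial.C (δ ⟨k, hklt⟩) : MvPolynomial (Fin n) ℂ).support := by
            rw [MvPolynomial.mem_support_iff] at hν ⊢
            intro h; apply hν
            show MvPolynomial.coeff ν (-MvPolynomial.C _) = 0
            rw [MvPolynomial.coeff_neg, h, neg_zero]
          exact dsum_C_le _ ν this
        have hb1 : ∀ ν ∈ (-MvPolynomial.C (δ ⟨k, hklt⟩) * P k 0 0).support,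
            (∑ i, ν i) + 1 ≤ D (k + 1) := by
          have := dsum_mul_le hCneg h00
          intro ν hν
          have h1 := this ν hν
          have h2 : D (k - 1) ≤ D (k + 1) := hDmono _ _ (by omega)
          omega
        have hb2 : ∀ ν ∈ (f ⟨k, hklt⟩ * P k 1 0).support,
            (∑ i, ν i) + 1 ≤ D (k + 1) := by
          have hf' : ∀ ν ∈ (f ⟨k, hklt⟩).support, (∑ i, ν i) + 0 ≤ gg k := by
            have h := hffsupp k hklt
            rwa [hfk] at h
          have := dsum_mul_le hf' h10
          intro ν hν
          have h1 := this ν hν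
          have := hDsucc k
          omega
        exact dsum_add_le hb1 hb2
      · -- new (0,0) bound : old (1,0) with D k
        rw [e00]
        intro ν hν
        have := h10 ν hν
        simpa using this
  obtain ⟨r, s, h11, _, hr, _, _, h00⟩ := main n (by omega) le_rfl
  have hPn : (((List.ofFn A).reverse).prod) = P n := by
    simp only [hP]
    rw [List.take_of_length_le (by simp)]
  refine ⟨P n 0 0 + r, ?_, ?_⟩
  · rw [hPn, h11, hFn]
    ring
  · apply dsum_add_le
    · intro ν hν
      have := h00 ν hν
      have h2 : D (n - 1) ≤ D n := hDmono _ _ (by omega)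
      rw [← hDn]
      omega
    · intro ν hν
      have := hr ν hν
      rw [← hDn]
      omega

/-- The leading monomial of `Φ = λ² - λ Tr(Mₙ) + δ₁⋯δₙ` in the graded lexicographic
order is `y₁^{d₁-1} ⋯ yₙ^{dₙ-1}`, with leading coefficient `-λ d₁ ⋯ dₙ`. -/
theorem stmt16 (n : ℕ) [NeZero n] (d : Fin n → ℕ) (hd : ∀ i, 2 ≤ d i)
    (p : Fin n → Polynomial ℂ) (hmonic : ∀ i, (p i).Monic)
    (hdeg : ∀ i, (p i).natDegree = d i)
    (δ : Fin n → ℂ) (lam : ℂ) (hlam : lam ≠ 0)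
    (M : Matrix (Fin 2) (Fin 2) (MvPolynomial (Fin n) ℂ))
    (hM : M = ((List.ofFn fun j : Fin n =>
        (!![0, 1; -MvPolynomial.C (δ j), Polynomial.aeval (X j) (derivative (p j))] :
          Matrix (Fin 2) (Fin 2) (MvPolynomial (Fin n) ℂ))).reverse).prod)
    (Φ : MvPolynomial (Fin n) ℂ)
    (hΦ : Φ = MvPolynomial.C (lam ^ 2)
        - MvPolynomial.C lam * (M 0 0 + M 1 1) + MvPolynomial.C (∏ i, δ i)) :
    IsLeadingMonomial Φ (Finsupp.equivFunOnFinite.symm fun i => d i - 1) ∧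
      MvPolynomial.coeff (Finsupp.equivFunOnFinite.symm fun i => d i - 1) Φ =
        -lam * ∏ i, (d i : ℂ) := by
  classical
  have hn : 0 < n := Nat.pos_of_ne_zero (NeZero.ne n)
  set f : Fin n → MvPolynomial (Fin n) ℂ :=
    fun j => Polynomial.aeval (X j) (derivative (p j)) with hf
  set μ : Fin n →₀ ℕ := Finsupp.equivFunOnFinite.symm fun i => d i - 1 with hμ
  have hμapp : ∀ i, μ i = d i - 1 := by intro i; simp [hμ]
  -- support and coeff facts for f j
  have hfsupp : ∀ j, ∀ ν ∈ (f j).support, ν ≤ Finsupp.single j (d j - 1) := by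
    intro j ν hν
    have h1 := aevalX_support j (derivative (p j)) ν hν
    have h2 : (derivative (p j)).natDegree ≤ d j - 1 := by
      have := Polynomial.natDegree_derivative_le (p j)
      rw [hdeg j] at this; exact this
    exact h1.trans (Finsupp.single_le_single.2 h2)
  have hfcoeff : ∀ j, MvPolynomial.coeff (Finsupp.single j (d j - 1)) (f j) = (d j : ℂ) := by
    intro j
    rw [hf]
    rw [aevalX_coeff j (derivative (p j)) (d j - 1)]
    rw [Polynomial.coeff_derivative]
    have hdj : d j - 1 + 1 = d j := by have := hd j; omega
    rw [hdj]
    have : (p j).coeff (d j) = 1 := by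
      have := (hmonic j).leadingCoeff
      rwa [Polynomial.leadingCoeff, hdeg j] at this
    rw [this, one_mul]
    exact_mod_cast congrArg (Nat.cast : ℕ → ℂ) hdj
  have hfdsum : ∀ j, ∀ ν ∈ (f j).support, (∑ i, ν i) ≤ d j - 1 := by
    intro j ν hν
    have h1 := hfsupp j ν hν
    calc (∑ i, ν i) ≤ ∑ i, Finsupp.single j (d j - 1) i :=
          Finset.sum_le_sum fun i _ => h1 i
      _ = d j - 1 := by
          rw [Finset.sum_eq_single j]
          · simp
          · intro b _ hb; exact Finsupp.single_eq_of_ne hb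
          · simp
  -- product facts
  have hμsum : μ = ∑ j, Finsupp.single j (d j - 1) := by
    ext i
    rw [Finsupp.finset_sum_apply, Finset.sum_eq_single i]
    · simp [hμapp]
    · intro b _ hb; exact Finsupp.single_eq_of_ne (Ne.symm hb)
    · simp
  obtain ⟨hFsupp, hFcoeff⟩ := prod_top d f hfsupp hfcoeff Finset.univ
  rw [← hμsum] at hFsupp hFcoeff
  -- trace structure
  obtain ⟨e, htr, he⟩ := trace_structure hn d hd δ f hfdsum
  have htrace : M 0 0 + M 1 1 = (∏ j, f j) + e := by rw [hM]; exact htr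
  have hdsumμ : (∑ i, μ i) = ∑ i, (d i - 1) := Finset.sum_congr rfl fun i _ => hμapp i
  have hμpos : 0 < ∑ i, μ i := by
    have i0 : Fin n := ⟨0, hn⟩
    have h1 : 1 ≤ μ i0 := by rw [hμapp]; have := hd i0; omega
    have h2 : μ i0 ≤ ∑ i, μ i := by
      simpa using Finset.single_le_sum (f := fun i => μ i) (fun i _ => Nat.zero_le _)
        (Finset.mem_univ i0)
    omega
  have hμne0 : μ ≠ 0 := by
    intro h; rw [h] at hμpos; simp at hμpos
  -- coefficient of μ in Φ
  have hcoeffν : ∀ ν, MvPolynomial.coeff ν Φ =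
      (if 0 = ν then lam ^ 2 else 0) - lam * (MvPolynomial.coeff ν (∏ j, f j)
        + MvPolynomial.coeff ν e) + (if 0 = ν then ∏ i, δ i else 0) := by
    intro ν
    rw [hΦ, htrace]
    simp only [MvPolynomial.coeff_add, MvPolynomial.coeff_sub, MvPolynomial.coeff_C_mul,
      MvPolynomial.coeff_C]
    try ring
  have hcoeffμ : MvPolynomial.coeff μ Φ = -lam * ∏ i, (d i : ℂ) := by
    rw [hcoeffν μ, if_neg (fun h => hμne0 h.symm), if_neg (fun h => hμne0 h.symm), hFcoeff]
    have heμ : MvPolynomial.coeff μ e = 0 := by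
      by_contra h
      have := he μ (MvPolynomial.mem_support_iff.2 h)
      omega
    rw [heμ]
    ring
  have hprodd : (∏ i, (d i : ℂ)) ≠ 0 := by
    rw [Finset.prod_ne_zero_iff]
    intro i _
    exact_mod_cast (by have := hd i; omega : d i ≠ 0)
  refine ⟨⟨?_, ?_⟩, hcoeffμ⟩
  · rw [MvPolynomial.mem_support_iff, hcoeffμ]
    exact mul_ne_zero (neg_ne_zero.2 hlam) hprodd
  · intro ν hν
    by_cases hem : ν = μ
    · exact Or.inl hem
    right
    left
    -- show ∑ ν < ∑ μ
    rw [MvPolynomial.mem_support_iff, hcoeffν ν] at hν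
    by_cases h0 : (0 : Fin n →₀ ℕ) = ν
    · subst h0
      simpa using hμpos
    by_cases hFm : MvPolynomial.coeff ν (∏ j, f j) ≠ 0
    · have hle := hFsupp ν (MvPolynomial.mem_support_iff.2 hFm)
      have hlt : ∃ i, ν i < μ i := by
        by_contra h
        push_neg at h
        apply hem
        ext i
        exact le_antisymm (hle i) (h i)
      obtain ⟨i, hi⟩ := hlt
      exact Finset.sum_lt_sum (fun i _ => hle i) ⟨i, Finset.mem_univ i, hi⟩
    by_cases hEm : MvPolynomial.coeff ν e ≠ 0
    · have := he ν (MvPolynomial.mem_support_iff.2 hEm)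
      omega
    push_neg at hFm hEm
    rw [if_neg h0, if_neg h0, hFm, hEm] at hν
    simp at hν
end
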